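/- arXiv:1010.4212 — 9 statements merged into one kernel-verified Lean document; each statement's English description precedes it below -/
import Mathlib

section
/- Let D be a finite universal set of distances (i.e., satisfying the 4-values condition) and let m ∈ D with m > 0. Suppose the set S of numbers r ∈ D such that the smallest element of D strictly greater than r exceeds m + r is nonempty. Then r₀ = min S is a jump number, i.e., the smallest element of D strictly greater than r₀ exceeds 2·r₀. -/
namespace Sauer

def IsMetricTriple (a b c : ℝ) : Prop := a ≤ b + c ∧ b ≤ a + c ∧ c ≤ a + b

def IsUniversalDist (D : Set ℝ) : Prop :=
  D.Finite ∧ (0 : ℝ) ∈ D ∧ (∀ d ∈ D, 0 ≤ d) ∧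
    ∀ s x₀ y₀ x₁ y₁ : ℝ, s ∈ D → x₀ ∈ D → y₀ ∈ D → x₁ ∈ D → y₁ ∈ D →
      0 < x₀ → 0 < y₀ → 0 < x₁ → 0 < y₁ →
      IsMetricTriple x₀ y₀ s → IsMetricTriple x₁ y₁ s →
      ∃ t ∈ D, 0 < t ∧ IsMetricTriple x₀ x₁ t ∧ IsMetricTriple y₀ y₁ t

open Classical in
noncomputable def dsucc (D : Set ℝ) (r : ℝ) : ℝ :=
  if ({s | s ∈ D ∧ r < s}).Nonempty then sInf {s | s ∈ D ∧ r < s} else r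

noncomputable def dpred (D : Set ℝ) (r : ℝ) : ℝ := sSup {s | s ∈ D ∧ s < r}

def IsBlock (D B : Set ℝ) : Prop :=
  ∃ (n : ℕ) (b : ℕ → ℝ),
    B = {x | ∃ i, i ≤ n ∧ x = b i} ∧
    (∀ i ≤ n, b i ∈ D) ∧ 0 < b 0 ∧
    (∀ i < n, b i < b (i + 1)) ∧
    (∀ y ∈ D, y < b 0 → 2 * y < b 0) ∧
    (∀ i < n, b (i + 1) = dsucc D (b i)) ∧
    (∀ i < n, b (i + 1) ≤ b i + b 0)

def IsJump (D : Set ℝ) (r : ℝ) : Prop := r ∈ D ∧ ∀ s ∈ D, r < s → 2 * r < s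

structure Katetov (D : Set ℝ) (M : Type) [MetricSpace M] where
  dom : Finset M
  f : M → ℝ
  mem : ∀ x ∈ dom, f x ∈ D
  pos : ∀ x ∈ dom, 0 < f x
  ineq1 : ∀ x ∈ dom, ∀ y ∈ dom, |f x - f y| ≤ dist x y
  ineq2 : ∀ x ∈ dom, ∀ y ∈ dom, dist x y ≤ f x + f y

variable {D : Set ℝ} {M : Type} [MetricSpace M]

def orb (t : Katetov D M) : Set M :=
  {y | y ∉ t.dom ∧ ∀ x ∈ t.dom, dist y x = t.f x}

noncomputable def rank (t : Katetov D M) : ℝ := sInf (t.f '' ↑t.dom)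

def orbDistSet (s t : Katetov D M) : Set ℝ :=
  {m | ∃ x ∈ orb s, ∃ y ∈ orb t, dist x y = m}

noncomputable def dminK (s t : Katetov D M) : ℝ := sInf (orbDistSet s t)

noncomputable def dmin (A B : Set M) : ℝ := sInf {d | ∃ x ∈ A, ∃ y ∈ B, dist x y = d}

def IsHomogeneous (M : Type) [MetricSpace M] : Prop :=
  ∀ (A : Finset M) (f : M → M),
    (∀ x ∈ A, ∀ y ∈ A, dist (f x) (f y) = dist x y) →
    ∃ g : M ≃ᵢ M, ∀ x ∈ A, g x = f x

def IsUrysohn (D : Set ℝ) (M : Type) [MetricSpace M] : Prop :=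
  Countable M ∧ (∀ x y : M, dist x y ∈ D) ∧ IsHomogeneous M ∧
    ∀ (N : Type) [MetricSpace N], Finite N → (∀ x y : N, dist x y ∈ D) →
      ∃ f : N → M, Isometry f

theorem statement1 (D : Set ℝ) (hD : IsUniversalDist D) (m : ℝ) (hm : m ∈ D)
    (hm0 : 0 < m) (S : Set ℝ) (hS : S = {r | r ∈ D ∧ m + r < dsucc D r})
    (hne : S.Nonempty) :
    sInf S ∈ S ∧ 2 * sInf S < dsucc D (sInf S) := by
  obtain ⟨hfin, h0D, hnn, h4⟩ := hD
  -- basic facts about dsucc over a finite D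
  have dsucc_spec : ∀ x : ℝ, (∃ s ∈ D, x < s) →
      dsucc D x ∈ D ∧ x < dsucc D x ∧ ∀ s ∈ D, x < s → dsucc D x ≤ s := by
    intro x hx
    have hne' : ({s | s ∈ D ∧ x < s}).Nonempty := by
      obtain ⟨s, hs, hxs⟩ := hx; exact ⟨s, hs, hxs⟩
    have hfin' : ({s | s ∈ D ∧ x < s}).Finite := hfin.subset (fun y hy => hy.1)
    have hmem : sInf {s | s ∈ D ∧ x < s} ∈ {s | s ∈ D ∧ x < s} :=
      hne'.csInf_mem hfin'
    have hval : dsucc D x = sInf {s | s ∈ D ∧ x < s} := by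
      rw [dsucc, if_pos hne']
    refine ⟨by rw [hval]; exact hmem.1, by rw [hval]; exact hmem.2, ?_⟩
    intro s hs hxs
    rw [hval]
    exact csInf_le hfin'.bddBelow ⟨hs, hxs⟩
  have hSD : S ⊆ D := by intro r hr; rw [hS] at hr; exact hr.1
  have hSfin : S.Finite := hfin.subset hSD
  have hr0S : sInf S ∈ S := hne.csInf_mem hSfin
  refine ⟨hr0S, ?_⟩
  set r := sInf S with hrdef
  have hrD : r ∈ D := hSD hr0S
  have hrgap : m + r < dsucc D r := by rw [hS] at hr0S; exact hr0S.2
  by_contra hcon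
  push_neg at hcon
  set q := dsucc D r with hqdef
  have hr0 : 0 ≤ r := hnn r hrD
  have hrq : r < q := by linarith
  have hqne : ∃ s ∈ D, r < s := by
    by_contra h
    have hval : dsucc D r = r := by
      rw [dsucc, if_neg]
      rintro ⟨s, hs, hrs⟩
      exact h ⟨s, hs, hrs⟩
    linarith
  have hq : q ∈ D ∧ r < q ∧ ∀ s ∈ D, r < s → q ≤ s := dsucc_spec r hqne
  -- extract q ∈ D properly
  have hqD : q ∈ D := hq.1
  have hqmin : ∀ s ∈ D, r < s → q ≤ s := hq.2.2
  have hrpos : 0 < r := by linarith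
  have hqpos : 0 < q := lt_trans hrpos hrq
  -- the set A of elements of D below q - r
  have hmqr : m < q - r := by linarith
  set A : Set ℝ := {x | x ∈ D ∧ x < q - r} with hAdef
  have hAne : A.Nonempty := ⟨m, hm, hmqr⟩
  have hAfin : A.Finite := hfin.subset (fun y hy => hy.1)
  have haA : sSup A ∈ A := hAne.csSup_mem hAfin
  set a := sSup A with hadef
  have haD : a ∈ D := haA.1
  have haqr : a < q - r := haA.2
  have hma : m ≤ a := le_csSup hAfin.bddAbove ⟨hm, hmqr⟩
  have hapos : 0 < a := lt_of_lt_of_le hm0 hma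
  have har : a < r := by linarith
  -- a⁺ = dsucc D a
  have hap : dsucc D a ∈ D ∧ a < dsucc D a ∧ ∀ s ∈ D, a < s → dsucc D a ≤ s :=
    dsucc_spec a ⟨r, hrD, har⟩
  set ap := dsucc D a with hapdef
  have hapD : ap ∈ D := hap.1
  have haap : a < ap := hap.2.1
  -- ap ≥ q - r by maximality of a
  have hapge : q - r ≤ ap := by
    by_contra h
    push_neg at h
    have : ap ≤ a := le_csSup hAfin.bddAbove ⟨hapD, h⟩
    linarith
  -- a ∉ S since a < r = sInf S, hence ap ≤ m + a
  have hanS : a ∉ S := by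
    intro haS
    have : r ≤ a := csInf_le hSfin.bddBelow haS
    linarith
  have hapla : ap ≤ m + a := by
    by_contra h
    push_neg at h
    exact hanS (by rw [hS]; exact ⟨haD, h⟩)
  have happos : 0 < ap := lt_trans hapos haap
  -- apply universality with shared side ap, triangles (q, r) and (a, a)
  obtain ⟨t, htD, htpos, ht1, ht2⟩ :=
    h4 ap q r a a hapD hqD hrD haD haD hqpos hrpos hapos hapos
      ⟨by linarith, by linarith, by linarith⟩
      ⟨by linarith, by linarith, by linarith⟩
  obtain ⟨h1a, h1b, h1c⟩ := ht1
  obtain ⟨h2a, h2b, h2c⟩ := ht2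
  -- q ≤ a + t gives t > r ; t ≤ r + a gives t < q
  have htr : r < t := by linarith
  have htq : t < q := by linarith
  have : q ≤ t := hqmin t htD htr
  linarith

end Sauer
end

section
/- Let D be a finite universal set of distances. Then D \ {0} is the union of pairwise disjoint blocks B₁, …, B_k such that: (1) every element of B_i is less than every element of B_{i+1}; (2) 2·max(B_i) < min(B_{i+1}); and (3) for every x ∈ B_i with x < max(B_i), x + min(B_i) ≥ x⁺ (the successor of x in D). -/
namespace Sauer

variable {D : Set ℝ} {M : Type} [MetricSpace M]

lemma enumF {α : Type*} [LinearOrder α] (F : Finset α) (d : α) :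
    ∃ e : ℕ → α, (∀ i < F.card, e i ∈ F) ∧ (∀ i j, i < j → j < F.card → e i < e j) ∧
      (∀ x ∈ F, ∃ i < F.card, e i = x) ∧ (∀ i, F.card ≤ i → e i = d) := by
  classical
  refine ⟨fun i => if h : i < F.card then F.orderEmbOfFin rfl ⟨i, h⟩ else d, ?_, ?_, ?_, ?_⟩
  · intro i hi
    simp only [dif_pos hi]
    exact Finset.orderEmbOfFin_mem F rfl _
  · intro i j hij hj
    have hi : i < F.card := lt_trans hij hj
    simp only [dif_pos hi, dif_pos hj]
    exact (F.orderEmbOfFin rfl).strictMono (show (⟨i, hi⟩ : Fin F.card) < ⟨j, hj⟩ from hij)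
  · intro x hx
    have : x ∈ Set.range (F.orderEmbOfFin rfl) := by
      rw [Finset.range_orderEmbOfFin]; exact hx
    obtain ⟨a, ha⟩ := this
    exact ⟨a.val, a.isLt, by simp only [dif_pos a.isLt]; rw [← ha]⟩
  · intro i hi
    simp [Nat.not_lt.mpr hi]

lemma key {D : Set ℝ} (hU : IsUniversalDist D) (b : ℕ → ℝ) (m i : ℕ) (hmi : m ≤ i)
    (hmem : ∀ j, m ≤ j → j ≤ i → b j ∈ D) (hpos : ∀ j, m ≤ j → j ≤ i → 0 < b j)
    (hmono : ∀ j j', m ≤ j → j ≤ j' → j' ≤ i → b j ≤ b j')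
    (hstep : ∀ j, m ≤ j → j < i → b (j+1) ≤ b j + b m)
    (c : ℝ) (hc : c ∈ D) (hci : b i < c) (hc2 : c ≤ 2 * b i)
    (hcmin : ∀ d ∈ D, b i < d → c ≤ d) :
    c ≤ b i + b m := by
  have hpc : 0 < c := lt_trans (hpos i hmi le_rfl) hci
  have main : ∀ r, r ≤ i - m → c ≤ b i + b (i - r) := by
    intro r
    induction r with
    | zero => intro _; simpa [two_mul] using hc2
    | succ r ih =>
      intro hr
      have hr' : r ≤ i - m := by omega
      have h := ih hr'
      set j := i - r with hj
      have hmj : m < j := by omega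
      have hji : j ≤ i := by omega
      -- apply universality
      obtain ⟨t, htD, htpos, ht1, ht2⟩ := hU.2.2.2 (b j) (b i) c (b m) (b (j-1))
        (hmem j hmj.le hji) (hmem i hmi le_rfl) hc (hmem m le_rfl hmi)
        (hmem (j-1) (by omega) (by omega))
        (hpos i hmi le_rfl) hpc (hpos m le_rfl hmi) (hpos (j-1) (by omega) (by omega))
        ⟨by nlinarith [hpos j hmj.le hji], h, by
          have := hmono j i hmj.le hji le_rfl
          linarith [hpc]⟩
        ⟨by linarith [hmono m (j-1) le_rfl (by omega) (by omega), hpos j hmj.le hji],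
         by linarith [hmono (j-1) j (by omega) (by omega) hji, hpos m le_rfl hmi],
         by have := hstep (j-1) (by omega) (by omega)
            have hjj : j - 1 + 1 = j := by omega
            rw [hjj] at this; linarith⟩
      -- ht1 : IsMetricTriple (b i) (b m) t, ht2 : IsMetricTriple c (b (j-1)) t
      have htle : t ≤ b i + b m := ht1.2.2
      have hct : c ≤ b (j-1) + t := ht2.1
      have hij1 : i - (r+1) = j - 1 := by omega
      rw [hij1]
      rcases le_or_gt t (b i) with h1 | h1
      · linarith
      · have := hcmin t htD h1
        have := hmono m (j-1) le_rfl (by omega) (by omega)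
        linarith
  have := main (i - m) le_rfl
  have him : i - (i - m) = m := by omega
  rwa [him] at this


lemma blocksteps {D : Set ℝ} (hU : IsUniversalDist D) (b : ℕ → ℝ) (m L : ℕ)
    (hmem : ∀ j, m ≤ j → j ≤ L → b j ∈ D) (hpos : ∀ j, m ≤ j → j ≤ L → 0 < b j)
    (hsmono : ∀ j, m ≤ j → j < L → b j < b (j+1))
    (hcmin : ∀ j, m ≤ j → j < L → ∀ d ∈ D, b j < d → b (j+1) ≤ d)
    (hnj : ∀ j, m ≤ j → j < L → b (j+1) ≤ 2 * b j) :
    ∀ i, m ≤ i → i < L → b (i+1) ≤ b i + b m := by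
  intro i
  induction i using Nat.strong_induction_on with
  | _ i ih =>
    intro hmi hiL
    have hmono : ∀ j j', m ≤ j → j ≤ j' → j' ≤ L → b j ≤ b j' := by
      intro j j' hj hjj' hj'
      induction j' with
      | zero =>
        have : j = 0 := by omega
        simp [this]
      | succ j' ih2 =>
        rcases Nat.lt_or_ge j (j'+1) with h | h
        · have : b j ≤ b j' := ih2 (by omega) (by omega)
          have := hsmono j' (by omega) (by omega)
          linarith
        · have : j = j' + 1 := by omega
          subst this; rfl
    exact key hU b m i hmi
      (fun j hj hji => hmem j hj (by omega))
      (fun j hj hji => hpos j hj (by omega))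
      (fun j j' hj hjj' hj' => hmono j j' hj hjj' (by omega))
      (fun j hj hji => ih j (by omega) hj (by omega))
      (b (i+1)) (hmem (i+1) (by omega) (by omega)) (hsmono i hmi hiL)
      (hnj i hmi hiL) (hcmin i hmi hiL)

theorem statement2 (D : Set ℝ) (hD : IsUniversalDist D) :
    ∃ (k : ℕ) (B : ℕ → Set ℝ),
      (D \ {0} = ⋃ i < k, B i) ∧
      (∀ i < k, IsBlock D (B i)) ∧
      (∀ i j, i < j → j < k → ∀ x ∈ B i, ∀ y ∈ B j, x < y) ∧
      (∀ i j, i < k → j < k → i ≠ j → Disjoint (B i) (B j)) ∧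
      (∀ i, i + 1 < k → 2 * sSup (B i) < sInf (B (i + 1))) ∧
      (∀ i < k, ∀ x ∈ B i, x < sSup (B i) → dsucc D x ≤ x + sInf (B i)) := by
  classical
  obtain ⟨hfin, h0D, hnn, -⟩ := id hD
  have hSfin : (D \ {0}).Finite := hfin.diff
  set F : Finset ℝ := hSfin.toFinset with hF
  set N : ℕ := F.card with hN
  obtain ⟨e, heF, he_lt, he_surj, -⟩ := enumF F 0
  rw [← hN] at heF he_lt he_surj
  have heS : ∀ i < N, e i ∈ D \ {0} := by
    intro i hi; have := heF i hi; rwa [hF, Set.Finite.mem_toFinset] at this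
  have heD : ∀ i < N, e i ∈ D := fun i hi => (heS i hi).1
  have hepos : ∀ i < N, 0 < e i := by
    intro i hi
    have h := heS i hi
    exact lt_of_le_of_ne (hnn _ h.1) (Ne.symm h.2)
  have he_le : ∀ i j, i ≤ j → j < N → e i ≤ e j := by
    intro i j hij hj
    rcases eq_or_lt_of_le hij with h | h
    · rw [h]
    · exact (he_lt i j h hj).le
  have he_surj' : ∀ x ∈ D \ {0}, ∃ i < N, e i = x := by
    intro x hx; exact he_surj x (by rwa [hF, Set.Finite.mem_toFinset])
  have he_refl : ∀ i j, i < N → j < N → e i < e j → i < j := by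
    intro i j hi hj h
    by_contra hc
    exact absurd (he_le j i (Nat.not_lt.mp hc) hi) (not_le.mpr h)
  -- successor characterization
  have hsucc_min : ∀ i, i + 1 < N → ∀ d ∈ D, e i < d → e (i+1) ≤ d := by
    intro i hi d hd hlt
    have hdpos : 0 < d := lt_trans (hepos i (by omega)) hlt
    obtain ⟨t, ht, rfl⟩ := he_surj' d ⟨hd, by simp [ne_of_gt hdpos]⟩
    have : i < t := he_refl i t (by omega) ht hlt
    exact he_le (i+1) t (by omega) ht
  have hdsucc : ∀ i, i + 1 < N → dsucc D (e i) = e (i+1) := by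
    intro i hi
    have hne : ({s | s ∈ D ∧ e i < s}).Nonempty :=
      ⟨e (i+1), heD _ hi, he_lt i (i+1) (by omega) hi⟩
    rw [dsucc, if_pos hne]
    exact IsLeast.csInf_eq ⟨⟨heD _ hi, he_lt i (i+1) (by omega) hi⟩,
      fun d hd => hsucc_min i hi d hd.1 hd.2⟩
  -- jumps / starts
  set J : ℕ → Prop := fun i => ∀ y ∈ D, y < e i → 2 * y < e i with hJ
  set starts : Finset ℕ := (Finset.range N).filter J with hstarts
  set k : ℕ := starts.card with hk
  obtain ⟨se, hseF, hse_lt, hse_surj, hse_junk⟩ := enumF starts N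
  rw [← hk] at hseF hse_lt hse_surj hse_junk
  set s : ℕ → ℕ := se with hs
  have hs_mem : ∀ j < k, s j < N ∧ J (s j) := by
    intro j hj
    have := hseF j hj
    rw [hstarts, Finset.mem_filter, Finset.mem_range] at this
    exact this
  have hsN : ∀ j, s j ≤ N := by
    intro j
    rcases Nat.lt_or_ge j k with h | h
    · exact (hs_mem j h).1.le
    · exact Nat.le_of_eq (hse_junk j h)
  have hskN : ∀ j, k ≤ j → s j = N := fun j h => hse_junk j h
  have hs_lt : ∀ i j, i < j → j ≤ k → i < k → s i < s j := by
    intro i j hij hjk hik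
    rcases Nat.lt_or_ge j k with h | h
    · exact hse_lt i j hij h
    · have hj' : s j = N := hskN j h
      rw [hs] at hj' ⊢; rw [hj']; exact (hs_mem i hik).1
  have hs_le : ∀ i j, i ≤ j → s i ≤ s j := by
    intro i j hij
    rcases eq_or_lt_of_le hij with rfl | h2
    · exact le_refl _
    · rcases Nat.lt_or_ge j k with h3 | h3
      · exact (hse_lt i j h2 h3).le
      · exact le_trans (hsN i) (le_of_eq (hskN j h3).symm)
  -- J 0 and s 0 = 0
  have hJ0 : 0 < N → J 0 := by
    intro hN0 y hy hylt
    have hy0 : 0 ≤ y := hnn y hy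
    rcases eq_or_lt_of_le hy0 with h | h
    · rw [← h]; simpa [← h] using hepos 0 hN0
    · obtain ⟨t, ht, rfl⟩ := he_surj' y ⟨hy, by simp [ne_of_gt h]⟩
      exact absurd (he_le 0 t (Nat.zero_le t) ht) (not_le.mpr hylt)
  have hs0 : 0 < N → s 0 = 0 := by
    intro hN0
    have h0s : (0 : ℕ) ∈ starts := by
      rw [hstarts, Finset.mem_filter, Finset.mem_range]
      exact ⟨hN0, hJ0 hN0⟩
    obtain ⟨j, hj, hje⟩ := hse_surj 0 h0s
    have : s 0 ≤ s j := hs_le 0 j (Nat.zero_le j)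
    rw [hs] at *
    omega
  have hk0 : 0 < N → 0 < k := by
    intro hN0
    have h0s : (0 : ℕ) ∈ starts := by
      rw [hstarts, Finset.mem_filter, Finset.mem_range]
      exact ⟨hN0, hJ0 hN0⟩
    rw [hk]
    exact Finset.card_pos.mpr ⟨0, h0s⟩
  -- covering
  have hcover : ∀ i < N, ∃ j < k, s j ≤ i ∧ i < s (j+1) := by
    intro i hi
    have hN0 : 0 < N := by omega
    set T : Finset ℕ := (Finset.range k).filter (fun j => s j ≤ i) with hT
    have hTne : T.Nonempty := ⟨0, by
      rw [hT, Finset.mem_filter, Finset.mem_range]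
      exact ⟨hk0 hN0, by rw [hs0 hN0]; omega⟩⟩
    set j := T.max' hTne with hj
    have hjT : j ∈ T := T.max'_mem hTne
    rw [hT, Finset.mem_filter, Finset.mem_range] at hjT
    refine ⟨j, hjT.1, hjT.2, ?_⟩
    by_contra hcon
    push_neg at hcon
    have hj1k : j + 1 < k := by
      by_contra h
      rw [hskN (j+1) (by omega)] at hcon
      omega
    have : j + 1 ∈ T := by
      rw [hT, Finset.mem_filter, Finset.mem_range]
      exact ⟨hj1k, hcon⟩
    have := T.le_max' _ this
    omega
  -- non-start indices are non-jumps
  have hnotJ : ∀ j < k, ∀ i, s j < i → i < s (j+1) → ¬ J i := by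
    intro j hj i hsi his hJi
    have hiN : i < N := lt_of_lt_of_le his (hsN (j+1))
    have : i ∈ starts := by
      rw [hstarts, Finset.mem_filter, Finset.mem_range]; exact ⟨hiN, hJi⟩
    obtain ⟨t, htk, hte⟩ := hse_surj i this
    rcases Nat.lt_or_ge j t with h | h
    · have : s (j+1) ≤ s t := hs_le (j+1) t (by omega)
      rw [hs] at *; omega
    · have : s t ≤ s j := hs_le t j h
      rw [hs] at *; omega
  -- non-jump gives e (i+1) ≤ 2 e i
  have hnj : ∀ j < k, ∀ i, s j ≤ i → i + 1 < s (j+1) → e (i+1) ≤ 2 * e i := by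
    intro j hj i hsi his
    have hni : ¬ J (i+1) := hnotJ j hj (i+1) (by omega) his
    simp only [hJ] at hni
    push_neg at hni
    obtain ⟨y, hyD, hylt, hyge⟩ := hni
    have hiN : i + 1 < N := lt_of_lt_of_le his (hsN (j+1))
    have hypos : 0 < y := by nlinarith [hepos (i+1) hiN]
    obtain ⟨t, ht, rfl⟩ := he_surj' y ⟨hyD, by simp [ne_of_gt hypos]⟩
    have htlt : t < i + 1 := he_refl t (i+1) ht hiN hylt
    have : e t ≤ e i := he_le t i (by omega) (by omega)
    linarith
  -- main block inequality
  have hblock : ∀ j < k, ∀ i, s j ≤ i → i + 1 < s (j+1) → e (i+1) ≤ e i + e (s j) := by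
    intro j hj i hsi his
    have hLN : s (j+1) - 1 < N := by
      have := hsN (j+1); omega
    refine blocksteps hD e (s j) (s (j+1) - 1)
      (fun t h1 h2 => heD t (by omega))
      (fun t h1 h2 => hepos t (by omega))
      (fun t h1 h2 => he_lt t (t+1) (by omega) (by omega))
      (fun t h1 h2 => hsucc_min t (by omega))
      (fun t h1 h2 => hnj j hj t h1 (by omega))
      i hsi (by omega)
  -- blocks
  set B : ℕ → Set ℝ := fun j => e '' (Set.Ico (s j) (s (j+1))) with hB
  have hmemB : ∀ j x, x ∈ B j ↔ ∃ a, (s j ≤ a ∧ a < s (j+1)) ∧ e a = x := by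
    intro j x
    simp [hB, Set.mem_image, Set.mem_Ico]
  have hgreat : ∀ i < k, IsGreatest (B i) (e (s (i+1) - 1)) := by
    intro i hik
    have h1 : s i < s (i+1) := hs_lt i (i+1) (by omega) (by omega) hik
    have h2 : s (i+1) ≤ N := hsN (i+1)
    have h3 : s i < N := (hs_mem i hik).1
    constructor
    · exact (hmemB i _).mpr ⟨s (i+1) - 1, ⟨by omega, by omega⟩, rfl⟩
    · rintro x hx
      obtain ⟨a, ⟨ha1, ha2⟩, rfl⟩ := (hmemB i x).mp hx
      exact he_le a (s (i+1) - 1) (by omega) (by omega)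
  have hleast : ∀ i < k, IsLeast (B i) (e (s i)) := by
    intro i hik
    have h1 : s i < s (i+1) := hs_lt i (i+1) (by omega) (by omega) hik
    have h2 : s (i+1) ≤ N := hsN (i+1)
    constructor
    · exact (hmemB i _).mpr ⟨s i, ⟨le_rfl, h1⟩, rfl⟩
    · rintro x hx
      obtain ⟨a, ⟨ha1, ha2⟩, rfl⟩ := (hmemB i x).mp hx
      exact he_le (s i) a ha1 (by omega)
  refine ⟨k, B, ?_, ?_, ?_, ?_, ?_, ?_⟩
  · -- covering equality
    ext x
    simp only [Set.mem_iUnion]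
    constructor
    · intro hx
      obtain ⟨i, hiN, rfl⟩ := he_surj' x hx
      obtain ⟨j, hjk, hji, hij⟩ := hcover i hiN
      exact ⟨j, hjk, (hmemB j _).mpr ⟨i, ⟨hji, hij⟩, rfl⟩⟩
    · rintro ⟨j, hjk, hx⟩
      obtain ⟨a, ⟨ha1, ha2⟩, rfl⟩ := (hmemB j _).mp hx
      exact heS a (lt_of_lt_of_le ha2 (hsN (j+1)))
  · -- IsBlock
    intro j hjk
    have h1 : s j < s (j+1) := hs_lt j (j+1) (by omega) (by omega) hjk
    have hsjN : s j < N := (hs_mem j hjk).1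
    have hEnd : s (j+1) ≤ N := hsN (j+1)
    refine ⟨s (j+1) - 1 - s j, fun t => e (s j + t), ?_, ?_, ?_, ?_, ?_, ?_, ?_⟩
    · ext x
      rw [hmemB]
      simp only [Set.mem_setOf_eq]
      constructor
      · rintro ⟨a, ⟨ha1, ha2⟩, rfl⟩
        refine ⟨a - s j, by omega, ?_⟩
        congr 1; omega
      · rintro ⟨t, ht, rfl⟩
        exact ⟨s j + t, ⟨by omega, by omega⟩, rfl⟩
    · intro t ht; exact heD _ (by omega)
    · simpa using hepos (s j) hsjN
    · intro t ht; exact he_lt _ _ (by omega) (by omega)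
    · intro y hy hlt
      have hJs := (hs_mem j hjk).2
      simp only [hJ] at hJs
      simp only [Nat.add_zero] at hlt ⊢
      exact hJs y hy hlt
    · intro t ht
      show e (s j + (t + 1)) = dsucc D (e (s j + t))
      have harr : s j + (t + 1) = (s j + t) + 1 := by omega
      rw [harr, hdsucc (s j + t) (by omega)]
    · intro t ht
      show e (s j + (t + 1)) ≤ e (s j + t) + e (s j + 0)
      have harr : s j + (t + 1) = (s j + t) + 1 := by omega
      have := hblock j hjk (s j + t) (by omega) (by omega)
      rw [harr]
      simpa using this
  · -- ordering between blocks
    intro i j hij hjk x hx y hy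
    obtain ⟨a, ⟨ha1, ha2⟩, rfl⟩ := (hmemB i x).mp hx
    obtain ⟨b, ⟨hb1, hb2⟩, rfl⟩ := (hmemB j y).mp hy
    have h1 : s (i+1) ≤ s j := hs_le (i+1) j hij
    exact he_lt a b (by omega) (lt_of_lt_of_le hb2 (hsN (j+1)))
  · -- disjointness
    intro i j hik hjk hne
    rw [Set.disjoint_left]
    intro x hx hx2
    obtain ⟨a, ⟨ha1, ha2⟩, rfl⟩ := (hmemB i x).mp hx
    obtain ⟨b, ⟨hb1, hb2⟩, hba⟩ := (hmemB j _).mp hx2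
    rcases Nat.lt_or_ge i j with h | h
    · have h1 : s (i+1) ≤ s j := hs_le (i+1) j h
      have : e a < e b := he_lt a b (by omega) (lt_of_lt_of_le hb2 (hsN (j+1)))
      rw [hba] at this
      exact lt_irrefl _ this
    · have hji : j < i := by omega
      have h1 : s (j+1) ≤ s i := hs_le (j+1) i hji
      have : e b < e a := he_lt b a (by omega) (lt_of_lt_of_le ha2 (hsN (i+1)))
      rw [hba] at this
      exact lt_irrefl _ this
  · -- 2 * sSup < sInf
    intro i hik
    rw [(hgreat i (by omega)).csSup_eq, (hleast (i+1) hik).csInf_eq]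
    have hJs := (hs_mem (i+1) hik).2
    simp only [hJ] at hJs
    have h1 : s i < s (i+1) := hs_lt i (i+1) (by omega) (by omega) (by omega)
    have h2 : s (i+1) < N := (hs_mem (i+1) hik).1
    exact hJs _ (heD _ (by omega)) (he_lt (s (i+1) - 1) (s (i+1)) (by omega) h2)
  · -- successor bound
    intro i hik x hx hlt
    have h1 : s i < s (i+1) := hs_lt i (i+1) (by omega) (by omega) hik
    have h2 : s (i+1) ≤ N := hsN (i+1)
    rw [(hgreat i hik).csSup_eq] at hlt
    rw [(hleast i hik).csInf_eq]
    obtain ⟨a, ⟨ha1, ha2⟩, rfl⟩ := (hmemB i x).mp hx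
    have haend : a < s (i+1) - 1 := by
      by_contra h
      push_neg at h
      have : a = s (i+1) - 1 := by omega
      rw [this] at hlt
      exact lt_irrefl _ hlt
    rw [hdsucc a (by omega)]
    exact hblock i hik a ha1 (by omega)
end Sauer
end

section
/- Let D be a finite universal distance set, M a countable Urysohn metric space with distance set D, and t a Katětov function of M with rank r = min{t(x) : x ∈ dom(t)}. Let D_t = {n ∈ D : n ≤ 2r}. Then the restriction of M to the orbit of t (the set of points realizing t) is isometric to the Urysohn space with distance set D_t; in particular, orb(t) is infinite. -/
namespace Sauer

variable {D : Set ℝ} {M : Type} [MetricSpace M]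

lemma rank_le (t : Katetov D M) {x : M} (hx : x ∈ t.dom) : rank t ≤ t.f x :=
  csInf_le ((t.dom.finite_toSet.image t.f).bddBelow) ⟨x, by simpa using hx, rfl⟩

lemma exists_rank (t : Katetov D M) (hne : t.dom.Nonempty) :
    ∃ a ∈ t.dom, t.f a = rank t := by
  have h1 : (t.f '' ↑t.dom).Nonempty := by
    obtain ⟨a, ha⟩ := hne; exact ⟨t.f a, a, by simpa using ha, rfl⟩
  have := h1.csInf_mem (t.dom.finite_toSet.image t.f)
  obtain ⟨a, ha, hfa⟩ := this
  exact ⟨a, by simpa using ha, hfa⟩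

lemma rank_pos (t : Katetov D M) (hne : t.dom.Nonempty) : 0 < rank t := by
  obtain ⟨a, ha, hfa⟩ := exists_rank t hne
  exact hfa ▸ t.pos a ha

lemma orb_dist_le (t : Katetov D M) (hne : t.dom.Nonempty) {x y : M}
    (hx : x ∈ orb t) (hy : y ∈ orb t) : dist x y ≤ 2 * rank t := by
  obtain ⟨a, ha, hfa⟩ := exists_rank t hne
  calc dist x y ≤ dist x a + dist a y := dist_triangle x a y
    _ = rank t + rank t := by rw [hx.2 a ha, dist_comm, hy.2 a ha, hfa]
    _ = 2 * rank t := by ring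

/-- Every Katětov function over a Urysohn space is realized. -/
lemma realize (h0 : (0:ℝ) ∈ D) (hM : IsUrysohn D M) (s : Katetov D M) :
    ∃ y, y ∉ s.dom ∧ ∀ x ∈ s.dom, dist y x = s.f x := by
  classical
  let N := Option {x // x ∈ s.dom}
  let d : N → N → ℝ := fun a b =>
    match a, b with
    | none, none => 0
    | none, some x => s.f x
    | some x, none => s.f x
    | some x, some y => dist (x : M) (y : M)
  have hpos : ∀ x : {x // x ∈ s.dom}, 0 < s.f x := fun x => s.pos x x.2
  letI : MetricSpace N :=
    { dist := d
      dist_self := by rintro (_ | x) <;> simp [d]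
      dist_comm := by rintro (_ | x) (_ | y) <;> simp [d, dist_comm]
      dist_triangle := by
        rintro (_ | x) (_ | y) (_ | z) <;> simp only [d]
        · simp
        · simp
        · have := (hpos y).le; linarith
        · have h := s.ineq1 y y.2 z z.2
          rw [abs_sub_le_iff] at h
          have := h.2; linarith [Subtype.dist_eq y z]
        · simp
        · exact s.ineq2 x x.2 z z.2
        · have h := s.ineq1 x x.2 y y.2
          rw [abs_sub_le_iff] at h
          linarith [h.1]
        · exact dist_triangle (x : M) (y : M) (z : M)
      eq_of_dist_eq_zero := by
        rintro (_ | x) (_ | y) h <;> simp only [d] at h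
        · rfl
        · exact absurd h (ne_of_gt (hpos y))
        · exact absurd h (ne_of_gt (hpos x))
        · exact congrArg some (Subtype.ext (by exact eq_of_dist_eq_zero h)) }
  have hfin : Finite N := inferInstance
  have hdists : ∀ a b : N, dist a b ∈ D := by
    rintro (_ | x) (_ | y)
    · exact h0
    · exact s.mem y y.2
    · exact s.mem x x.2
    · exact hM.2.1 x y
  obtain ⟨f, hf⟩ := hM.2.2.2 N hfin hdists
  let F : M → M := fun x => if h : x ∈ s.dom then f (some ⟨x, h⟩) else x
  have hFiso : ∀ x ∈ s.dom, ∀ y ∈ s.dom, dist (F x) (F y) = dist x y := by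
    intro x hx y hy
    show dist (F x) (F y) = dist x y
    simp only [F, dif_pos hx, dif_pos hy]
    rw [hf.dist_eq]
    rfl
  obtain ⟨g, hg⟩ := hM.2.2.1 s.dom F hFiso
  have key : ∀ x ∈ s.dom, dist (g.symm (f none)) x = s.f x := by
    intro x hx
    calc dist (g.symm (f none)) x
        = dist (g (g.symm (f none))) (g x) := (g.dist_eq _ _).symm
      _ = dist (f none) (g x) := by rw [g.apply_symm_apply]
      _ = dist (f none) (f (some ⟨x, hx⟩)) := by rw [hg x hx]; simp only [F, dif_pos hx]
      _ = s.f x := by rw [hf.dist_eq]; rfl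
  refine ⟨g.symm (f none), ?_, key⟩
  intro hmem
  have h := s.pos _ hmem
  have h2 := key _ hmem
  rw [dist_self] at h2
  linarith

lemma extend (h0 : (0:ℝ) ∈ D) (hM : IsUrysohn D M) (t : Katetov D M) (hne : t.dom.Nonempty)
    (S : Finset M) (hS : ∀ x ∈ S, x ∈ orb t) (φ : M → ℝ)
    (hmem : ∀ x ∈ S, φ x ∈ D) (hpos : ∀ x ∈ S, 0 < φ x)
    (hle : ∀ x ∈ S, φ x ≤ 2 * rank t)
    (h1 : ∀ x ∈ S, ∀ y ∈ S, |φ x - φ y| ≤ dist x y)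
    (h2 : ∀ x ∈ S, ∀ y ∈ S, dist x y ≤ φ x + φ y) :
    ∃ y ∈ orb t, ∀ x ∈ S, dist y x = φ x := by
  classical
  have hdisj : ∀ x ∈ t.dom, x ∉ S := fun x hx hxS => (hS x hxS).1 hx
  have hdist : ∀ x ∈ S, ∀ a ∈ t.dom, dist x a = t.f a := fun x hx => (hS x hx).2
  have hmix1 : ∀ x ∈ S, ∀ a ∈ t.dom, |φ x - t.f a| ≤ dist x a := by
    intro x hx a ha
    rw [hdist x hx a ha, abs_sub_le_iff]
    have h3 := hle x hx
    have h4 := rank_le t ha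
    have h5 := (hpos x hx).le
    constructor <;> linarith
  have hmix2 : ∀ x ∈ S, ∀ a ∈ t.dom, dist x a ≤ φ x + t.f a := by
    intro x hx a ha
    rw [hdist x hx a ha]
    linarith [(hpos x hx).le]
  let s : Katetov D M :=
    { dom := t.dom ∪ S
      f := fun x => if x ∈ S then φ x else t.f x
      mem := by
        intro x hx
        rcases Finset.mem_union.1 hx with h | h
        · rw [if_neg (hdisj x h)]; exact t.mem x h
        · rw [if_pos h]; exact hmem x h
      pos := by
        intro x hx
        rcases Finset.mem_union.1 hx with h | h
        · rw [if_neg (hdisj x h)]; exact t.pos x h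
        · rw [if_pos h]; exact hpos x h
      ineq1 := by
        intro x hx y hy
        rcases Finset.mem_union.1 hx with h | h <;> rcases Finset.mem_union.1 hy with h' | h'
        · rw [if_neg (hdisj x h), if_neg (hdisj y h')]; exact t.ineq1 x h y h'
        · rw [if_neg (hdisj x h), if_pos h', abs_sub_comm, dist_comm]; exact hmix1 y h' x h
        · rw [if_pos h, if_neg (hdisj y h')]; exact hmix1 x h y h'
        · rw [if_pos h, if_pos h']; exact h1 x h y h'
      ineq2 := by
        intro x hx y hy
        rcases Finset.mem_union.1 hx with h | h <;> rcases Finset.mem_union.1 hy with h' | h'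
        · rw [if_neg (hdisj x h), if_neg (hdisj y h')]; exact t.ineq2 x h y h'
        · rw [if_neg (hdisj x h), if_pos h', dist_comm, add_comm]; exact hmix2 y h' x h
        · rw [if_pos h, if_neg (hdisj y h')]; exact hmix2 x h y h'
        · rw [if_pos h, if_pos h']; exact h2 x h y h' }
  obtain ⟨y, hynot, hy⟩ := realize h0 hM s
  have hys : s.dom = t.dom ∪ S := rfl
  refine ⟨y, ⟨fun hmem' => hynot (Finset.mem_union_left _ hmem'), fun a ha => ?_⟩, fun x hx => ?_⟩
  · have h := hy a (Finset.mem_union_left _ ha)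
    rw [h]
    show (if a ∈ S then φ a else t.f a) = t.f a
    rw [if_neg (hdisj a ha)]
  · have h := hy x (Finset.mem_union_right _ hx)
    rw [h]
    show (if x ∈ S then φ x else t.f x) = φ x
    rw [if_pos hx]

lemma mapsOrb (t : Katetov D M) (g : M ≃ᵢ M) (hg : ∀ x ∈ t.dom, g x = x) :
    ∀ y ∈ orb t, g y ∈ orb t := by
  intro y hy
  have key : ∀ x ∈ t.dom, dist (g y) x = t.f x := by
    intro x hx
    calc dist (g y) x = dist (g y) (g x) := by rw [hg x hx]
      _ = dist y x := g.dist_eq y x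
      _ = t.f x := hy.2 x hx
  refine ⟨fun hmem => ?_, key⟩
  have := key _ hmem
  rw [dist_self] at this
  exact absurd this.symm (ne_of_gt (t.pos _ hmem))

theorem statement3' (D : Set ℝ) (hD : (0:ℝ) ∈ D) (M : Type) [MetricSpace M]
    (hM : IsUrysohn D M) (t : Katetov D M) (hne : t.dom.Nonempty)
    (r : ℝ) (hr : r = rank t) :
    IsUrysohn {n | n ∈ D ∧ n ≤ 2 * r} ↥(orb t) ∧ (orb t).Infinite := by
  classical
  have h0 : (0:ℝ) ∈ D := hD
  have hrpos : 0 < r := hr ▸ rank_pos t hne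
  -- distances in the orbit
  have hdle : ∀ x y : ↥(orb t), dist x y ∈ {n | n ∈ D ∧ n ≤ 2 * r} := by
    intro x y
    rw [Subtype.dist_eq]
    exact ⟨hM.2.1 x y, hr ▸ orb_dist_le t hne x.2 y.2⟩
  -- infinite
  have hinf : (orb t).Infinite := by
    intro hfin
    obtain ⟨a, ha, hfa⟩ := exists_rank t hne
    obtain ⟨y, hy, hyd⟩ := extend h0 hM t hne hfin.toFinset
      (fun x hx => hfin.mem_toFinset.1 hx) (fun _ => rank t)
      (fun x hx => hfa ▸ t.mem a ha) (fun x hx => rank_pos t hne)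
      (fun x hx => by linarith [rank_pos t hne])
      (fun x hx y hy => by simp [dist_nonneg])
      (fun x hx y hy => by
        have := orb_dist_le t hne (hfin.mem_toFinset.1 hx) (hfin.mem_toFinset.1 hy)
        linarith)
    have := hyd y (hfin.mem_toFinset.2 hy)
    rw [dist_self] at this
    exact absurd this.symm (ne_of_gt (rank_pos t hne))
  refine ⟨⟨?_, hdle, ?_, ?_⟩, hinf⟩
  · haveI := hM.1
    exact inferInstance
  -- homogeneity
  · intro A f hf
    set F : M → M := fun x => if h : x ∈ orb t then (f ⟨x, h⟩ : M) else x with hF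
    have hFA : ∀ a : ↥(orb t), F ↑a = ↑(f a) := by
      intro a
      simp only [hF, dif_pos a.2]
    have hFdom : ∀ x ∈ t.dom, F x = x := by
      intro x hx
      have : x ∉ orb t := fun h => h.1 hx
      simp only [hF, dif_neg this]
    set B : Finset M := A.image Subtype.val ∪ t.dom with hB
    have hmemB : ∀ x ∈ B, (∃ a ∈ A, ↑a = x) ∨ x ∈ t.dom := by
      intro x hx
      rcases Finset.mem_union.1 hx with h | h
      · obtain ⟨a, ha, rfl⟩ := Finset.mem_image.1 h
        exact Or.inl ⟨a, ha, rfl⟩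
      · exact Or.inr h
    have hFiso : ∀ x ∈ B, ∀ y ∈ B, dist (F x) (F y) = dist x y := by
      intro x hx y hy
      rcases hmemB x hx with ⟨a, ha, rfl⟩ | h <;> rcases hmemB y hy with ⟨b, hb, rfl⟩ | h'
      · rw [hFA a, hFA b, ← Subtype.dist_eq, hf a ha b hb, Subtype.dist_eq]
      · rw [hFA a, hFdom y h', (f a).2.2 y h', ← a.2.2 y h']
      · rw [hFA b, hFdom x h, dist_comm, (f b).2.2 x h, dist_comm x ↑b, ← b.2.2 x h]
      · rw [hFdom x h, hFdom y h']
    obtain ⟨g, hg⟩ := hM.2.2.1 B F hFiso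
    have hgdom : ∀ x ∈ t.dom, g x = x := by
      intro x hx
      rw [hg x (Finset.mem_union_right _ hx), hFdom x hx]
    have hgsdom : ∀ x ∈ t.dom, g.symm x = x := by
      intro x hx
      conv_lhs => rw [← hgdom x hx]
      exact g.symm_apply_apply x
    refine ⟨⟨⟨fun y => ⟨g y, mapsOrb t g hgdom y y.2⟩,
        fun y => ⟨g.symm y, mapsOrb t g.symm hgsdom y y.2⟩, ?_, ?_⟩, ?_⟩, ?_⟩
    · intro y; exact Subtype.ext (g.symm_apply_apply y)
    · intro y; exact Subtype.ext (g.apply_symm_apply y)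
    · refine Isometry.of_dist_eq fun x y => ?_
      rw [Subtype.dist_eq, Subtype.dist_eq]
      exact g.dist_eq x y
    · intro a ha
      apply Subtype.ext
      show g ↑a = ↑(f a)
      rw [hg ↑a (Finset.mem_union_left _ (Finset.mem_image.2 ⟨a, ha, rfl⟩)), hFA a]
  -- universality
  · intro N _ hNfin hNd
    haveI := Fintype.ofFinite N
    set n := Fintype.card N with hn
    set e : Fin n ≃ N := (Fintype.equivFin N).symm with he
    have claim : ∀ k, k ≤ n → ∃ F : Fin n → M,
        (∀ i : Fin n, i.val < k → F i ∈ orb t) ∧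
        (∀ i j : Fin n, i.val < k → j.val < k → dist (F i) (F j) = dist (e i) (e j)) := by
      intro k
      induction k with
      | zero =>
        intro _
        obtain ⟨y0, hy0, hy0d⟩ := realize h0 hM t
        exact ⟨fun _ => y0, fun i hi => absurd hi (Nat.not_lt_zero _), fun i j hi _ => absurd hi (Nat.not_lt_zero _)⟩
      | succ k ih =>
        intro hk1
        obtain ⟨F, hF1, hF2⟩ := ih (Nat.le_of_succ_le hk1)
        have hkn : k < n := hk1
        set p : Fin n := ⟨k, hkn⟩ with hp
        have hinj : ∀ i j : Fin n, i.val < k → j.val < k → F i = F j → i = j := by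
          intro i j hi hj hFij
          by_contra hne'
          have : dist (e i) (e j) ≠ 0 := by
            rw [dist_ne_zero]
            exact fun h => hne' (e.injective h)
          rw [← hF2 i j hi hj, hFij, dist_self] at this
          exact this rfl
        set S : Finset M := (Finset.univ.filter (fun i : Fin n => i.val < k)).image F with hS
        set φ : M → ℝ := fun x =>
          if h : ∃ i : Fin n, i.val < k ∧ F i = x then dist (e h.choose) (e p) else 1 with hφ
        have hkey : ∀ i : Fin n, i.val < k → φ (F i) = dist (e i) (e p) := by
          intro i hi
          have hex : ∃ j : Fin n, j.val < k ∧ F j = F i := ⟨i, hi, rfl⟩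
          have hc := hex.choose_spec
          have : hex.choose = i := hinj _ _ hc.1 hi hc.2
          simp only [hφ, dif_pos hex, this]
        have hmemS : ∀ x ∈ S, ∃ i : Fin n, i.val < k ∧ F i = x := by
          intro x hx
          obtain ⟨i, hi, rfl⟩ := Finset.mem_image.1 hx
          exact ⟨i, (Finset.mem_filter.1 hi).2, rfl⟩
        have hnep : ∀ i : Fin n, i.val < k → e i ≠ e p := by
          intro i hi h
          have := e.injective h
          rw [this] at hi
          exact absurd hi (lt_irrefl _)
        obtain ⟨y, hy, hyd⟩ := extend h0 hM t hne S
          (fun x hx => by obtain ⟨i, hi, rfl⟩ := hmemS x hx; exact hF1 i hi)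
          φ
          (fun x hx => by
            obtain ⟨i, hi, rfl⟩ := hmemS x hx
            rw [hkey i hi]
            exact (hNd _ _).1)
          (fun x hx => by
            obtain ⟨i, hi, rfl⟩ := hmemS x hx
            rw [hkey i hi]
            exact dist_pos.2 (hnep i hi))
          (fun x hx => by
            obtain ⟨i, hi, rfl⟩ := hmemS x hx
            rw [hkey i hi, ← hr]
            exact (hNd _ _).2)
          (fun x hx y' hy' => by
            obtain ⟨i, hi, rfl⟩ := hmemS x hx
            obtain ⟨j, hj, rfl⟩ := hmemS y' hy'
            rw [hkey i hi, hkey j hj, hF2 i j hi hj]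
            exact abs_dist_sub_le (e i) (e j) (e p))
          (fun x hx y' hy' => by
            obtain ⟨i, hi, rfl⟩ := hmemS x hx
            obtain ⟨j, hj, rfl⟩ := hmemS y' hy'
            rw [hkey i hi, hkey j hj, hF2 i j hi hj, dist_comm (e j) (e p)]
            exact dist_triangle (e i) (e p) (e j))
        have hneqp : ∀ i : Fin n, i.val < k → i ≠ p := by
          intro i hi hip
          rw [hip] at hi
          exact absurd hi (lt_irrefl k)
        refine ⟨Function.update F p y, ?_, ?_⟩
        · intro i hi
          rcases Nat.lt_succ_iff_lt_or_eq.1 hi with h | h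
          · rw [Function.update_of_ne (hneqp i h)]
            exact hF1 i h
          · have : i = p := Fin.ext h
            rw [this, Function.update_self]
            exact hy
        · have hupd : ∀ i : Fin n, i.val < k → Function.update F p y i = F i := by
            intro i hi
            exact Function.update_of_ne (hneqp i hi) _ _
          intro i j hi hj
          rcases Nat.lt_succ_iff_lt_or_eq.1 hi with h | h <;>
            rcases Nat.lt_succ_iff_lt_or_eq.1 hj with h' | h'
          · rw [hupd i h, hupd j h']
            exact hF2 i j h h'
          · have : j = p := Fin.ext h'
            rw [this, hupd i h, Function.update_self, dist_comm, hyd (F i) (Finset.mem_image.2 ⟨i, Finset.mem_filter.2 ⟨Finset.mem_univ i, h⟩, rfl⟩), hkey i h, dist_comm]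
          · have : i = p := Fin.ext h
            rw [this, hupd j h', Function.update_self, hyd (F j) (Finset.mem_image.2 ⟨j, Finset.mem_filter.2 ⟨Finset.mem_univ j, h'⟩, rfl⟩), hkey j h', dist_comm]
          · have hip : i = p := Fin.ext h
            have hjp : j = p := Fin.ext h'
            rw [hip, hjp, dist_self, dist_self]
        
    obtain ⟨F, hF1, hF2⟩ := claim n le_rfl
    refine ⟨fun a => ⟨F (e.symm a), hF1 _ (Fin.is_lt _)⟩, Isometry.of_dist_eq fun a b => ?_⟩
    rw [Subtype.dist_eq]
    show dist (F (e.symm a)) (F (e.symm b)) = dist a b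
    rw [hF2 _ _ (Fin.is_lt _) (Fin.is_lt _), e.apply_symm_apply, e.apply_symm_apply]

theorem statement3 (D : Set ℝ) (hD : IsUniversalDist D) (M : Type) [MetricSpace M]
    (hM : IsUrysohn D M) (t : Katetov D M) (hne : t.dom.Nonempty)
    (r : ℝ) (hr : r = rank t) :
    IsUrysohn {n | n ∈ D ∧ n ≤ 2 * r} ↥(orb t) ∧ (orb t).Infinite := by
  exact statement3' D hD.2.1 M hM t hne r hr

end Sauer
end

section
/- Let M be a countable Urysohn metric space with finite distance set D, H = (H,d) a subspace of M with H ⊆ M. Then H is isometric to M if and only if for every Katětov function t of M with dom(t) ⊆ H, the orbit orb(t) intersects H. -/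
namespace Sauer

variable {D : Set ℝ} {M : Type} [MetricSpace M]

noncomputable def optDist (t : Katetov D M) :
    Option {x : M // x ∈ t.dom} → Option {x : M // x ∈ t.dom} → ℝ
  | some x, some y => dist x.1 y.1
  | some x, none => t.f x.1
  | none, some y => t.f y.1
  | none, none => 0

noncomputable def optMetric (t : Katetov D M) : MetricSpace (Option {x : M // x ∈ t.dom}) where
  dist := optDist t
  dist_self a := by
    cases a with
    | none => rfl
    | some x => exact dist_self x.1
  dist_comm a b := by
    cases a <;> cases b <;> simp [optDist, dist_comm]
  dist_triangle a b c := by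
    rcases a with _ | x <;> rcases b with _ | y <;> rcases c with _ | z
    · show (0:ℝ) ≤ 0 + 0; norm_num
    · show t.f z.1 ≤ 0 + t.f z.1; norm_num
    · show (0:ℝ) ≤ t.f y.1 + t.f y.1
      have := t.pos y.1 y.2; linarith
    · show t.f z.1 ≤ t.f y.1 + dist y.1 z.1
      have h := abs_le.mp (t.ineq1 y.1 y.2 z.1 z.2); linarith [h.2]
    · show t.f x.1 ≤ t.f x.1 + 0; norm_num
    · show dist x.1 z.1 ≤ t.f x.1 + t.f z.1
      exact t.ineq2 x.1 x.2 z.1 z.2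
    · show t.f x.1 ≤ dist x.1 y.1 + t.f y.1
      have h := abs_le.mp (t.ineq1 x.1 x.2 y.1 y.2); linarith [h.2]
    · exact dist_triangle x.1 y.1 z.1
  eq_of_dist_eq_zero := by
    intro a b h
    rcases a with _ | x <;> rcases b with _ | y
    · rfl
    · exact absurd h (by have := t.pos y.1 y.2; change t.f y.1 ≠ 0; linarith)
    · exact absurd h (by have := t.pos x.1 x.2; change t.f x.1 ≠ 0; linarith)
    · exact congrArg some (Subtype.ext (eq_of_dist_eq_zero h))

lemma orb_nonempty (hD0 : (0:ℝ) ∈ D) (hM : IsUrysohn D M) (t : Katetov D M) :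
    (orb t).Nonempty := by
  classical
  letI : MetricSpace (Option {x : M // x ∈ t.dom}) := optMetric t
  obtain ⟨g, hg⟩ := hM.2.2.2 (Option {x : M // x ∈ t.dom}) (by infer_instance) (by
    intro a b
    rcases a with _ | x <;> rcases b with _ | y
    · exact hD0
    · exact t.mem y.1 y.2
    · exact t.mem x.1 x.2
    · exact hM.2.1 x.1 y.1)
  set φ : M → M := fun x => if h : x ∈ t.dom then g (some ⟨x, h⟩) else x with hφ
  obtain ⟨ψ, hψ⟩ := hM.2.2.1 t.dom φ (by
    intro x hx y hy
    simp only [hφ, dif_pos hx, dif_pos hy]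
    rw [hg.dist_eq]
    rfl)
  have hdist : ∀ x ∈ t.dom, dist (ψ.symm (g none)) x = t.f x := by
    intro x hx
    have : dist (ψ.symm (g none)) x = dist (g none) (ψ x) := by
      rw [← ψ.dist_eq (ψ.symm (g none)) x, ψ.apply_symm_apply]
    rw [this, hψ x hx, hφ]
    simp only [dif_pos hx]
    rw [hg.dist_eq]
    rfl
  refine ⟨ψ.symm (g none), fun hmem => ?_, hdist⟩
  have h1 := hdist _ hmem
  rw [dist_self] at h1
  have := t.pos _ hmem
  linarith

lemma exists_katetov (hDdist : ∀ x y : M, dist x y ∈ D) (n : ℕ) (p q : ℕ → M) (m : M)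
    (hpq : ∀ i < n, ∀ j < n, dist (q i) (q j) = dist (p i) (p j))
    (hm : ∀ j < n, p j ≠ m) :
    ∃ t : Katetov D M, (↑t.dom : Set M) = q '' {j | j < n} ∧
      ∀ j < n, t.f (q j) = dist m (p j) := by
  classical
  have wd : ∀ i j, i < n → j < n → q i = q j → p i = p j := by
    intro i j hi hj hq
    have : dist (p i) (p j) = 0 := by rw [← hpq i hi j hj, hq, dist_self]
    exact eq_of_dist_eq_zero this
  set F : M → ℝ := fun x => if h : ∃ j, j < n ∧ q j = x then dist m (p h.choose) else 0 with hF
  have hFq : ∀ j < n, F (q j) = dist m (p j) := by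
    intro j hj
    have h : ∃ i, i < n ∧ q i = q j := ⟨j, hj, rfl⟩
    simp only [hF, dif_pos h]
    rw [wd _ _ h.choose_spec.1 hj h.choose_spec.2]
  set A : Finset M := (Finset.range n).image q with hA
  have hmemA : ∀ x, x ∈ A ↔ ∃ j, j < n ∧ q j = x := by
    intro x; simp [hA, Finset.mem_image]
  refine ⟨⟨A, F, ?_, ?_, ?_, ?_⟩, ?_, hFq⟩
  · intro x hx
    obtain ⟨j, hj, rfl⟩ := (hmemA x).1 hx
    rw [hFq j hj]; exact hDdist m (p j)
  · intro x hx
    obtain ⟨j, hj, rfl⟩ := (hmemA x).1 hx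
    rw [hFq j hj]
    exact dist_pos.2 fun h => hm j hj h.symm
  · intro x hx y hy
    obtain ⟨j, hj, rfl⟩ := (hmemA x).1 hx
    obtain ⟨i, hi, rfl⟩ := (hmemA y).1 hy
    rw [hFq j hj, hFq i hi, hpq j hj i hi]
    have h := abs_dist_sub_le (p j) (p i) m
    simpa [dist_comm] using h
  · intro x hx y hy
    obtain ⟨j, hj, rfl⟩ := (hmemA x).1 hx
    obtain ⟨i, hi, rfl⟩ := (hmemA y).1 hy
    rw [hFq j hj, hFq i hi, hpq j hj i hi]
    have h := dist_triangle (p j) m (p i)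
    simpa [dist_comm] using h
  · ext x
    simp [hA, Finset.coe_image, Set.mem_image]

lemma extend_any (hD0 : (0:ℝ) ∈ D) (hM : IsUrysohn D M) (n : ℕ) (p q : ℕ → M)
    (hpq : ∀ i < n, ∀ j < n, dist (q i) (q j) = dist (p i) (p j)) (m : M) :
    ∃ y : M, ∀ j < n, dist y (q j) = dist m (p j) := by
  by_cases hex : ∃ j, j < n ∧ p j = m
  · obtain ⟨j, hj, hp⟩ := hex
    refine ⟨q j, fun i hi => ?_⟩
    rw [hpq j hj i hi, hp]
  · push_neg at hex
    obtain ⟨t, hdom, hf⟩ := exists_katetov hM.2.1 n p q m hpq hex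
    obtain ⟨y, _, hy⟩ := orb_nonempty hD0 hM t
    refine ⟨y, fun j hj => ?_⟩
    have hqj : q j ∈ t.dom := by
      have : q j ∈ (↑t.dom : Set M) := by rw [hdom]; exact ⟨j, hj, rfl⟩
      exact this
    rw [hy (q j) hqj, hf j hj]

lemma extend_H (hD0 : (0:ℝ) ∈ D) (hM : IsUrysohn D M) (H : Set M)
    (horb : ∀ t : Katetov D M, ↑t.dom ⊆ H → (orb t ∩ H).Nonempty)
    (n : ℕ) (p q : ℕ → M)
    (hpq : ∀ i < n, ∀ j < n, dist (q i) (q j) = dist (p i) (p j))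
    (hqH : ∀ j < n, q j ∈ H) (m : M) :
    ∃ y ∈ H, ∀ j < n, dist y (q j) = dist m (p j) := by
  by_cases hex : ∃ j, j < n ∧ p j = m
  · obtain ⟨j, hj, hp⟩ := hex
    refine ⟨q j, hqH j hj, fun i hi => ?_⟩
    rw [hpq j hj i hi, hp]
  · push_neg at hex
    obtain ⟨t, hdom, hf⟩ := exists_katetov hM.2.1 n p q m hpq hex
    obtain ⟨y, hyo, hyH⟩ := horb t (by
      rw [hdom]; rintro x ⟨j, hj, rfl⟩; exact hqH j hj)
    refine ⟨y, hyH, fun j hj => ?_⟩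
    have hqj : q j ∈ t.dom := by
      have : q j ∈ (↑t.dom : Set M) := by rw [hdom]; exact ⟨j, hj, rfl⟩
      exact this
    rw [hyo.2 (q j) hqj, hf j hj]

noncomputable def seqAux {M : Type} (next : ℕ → (ℕ → M × M) → M × M) (z : M × M) :
    ℕ → ℕ → M × M
  | 0 => fun _ => z
  | n + 1 => fun j => if j = n then next n (seqAux next z n) else seqAux next z n j

lemma seqAux_stable {M : Type} (next : ℕ → (ℕ → M × M) → M × M) (z : M × M) :
    ∀ m n, n ≤ m → ∀ j < n, seqAux next z m j = seqAux next z n j := by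
  intro m
  induction m with
  | zero => intro n hn j hj; omega
  | succ m ih =>
    intro n hn j hj
    rcases eq_or_lt_of_le hn with rfl | hlt
    · rfl
    · have hnm : n ≤ m := by omega
      have hjm : j ≠ m := by omega
      simp only [seqAux]
      rw [if_neg hjm, ih n hnm j hj]

lemma backward (hD0 : (0:ℝ) ∈ D) (hM : IsUrysohn D M) (H : Set M)
    (horb : ∀ t : Katetov D M, ↑t.dom ⊆ H → (orb t ∩ H).Nonempty) :
    ∃ f : M → M, Isometry f ∧ Set.range f = H := by
  classical
  have hHne : H.Nonempty := by
    obtain ⟨y, _, hyH⟩ := horb ⟨∅, fun _ => 0, by simp, by simp, by simp, by simp⟩ (by simp)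
    exact ⟨y, hyH⟩
  haveI : Countable M := hM.1
  haveI : Nonempty M := ⟨hHne.choose⟩
  haveI : Nonempty ↥H := hHne.to_subtype
  obtain ⟨e, he⟩ := exists_surjective_nat M
  obtain ⟨eH, heH⟩ := exists_surjective_nat ↥H
  set z : M × M := (hHne.choose, hHne.choose) with hz
  set next : ℕ → (ℕ → M × M) → M × M := fun n s =>
    if n % 2 = 0 then
      (e (n / 2),
        if h : ∃ y, y ∈ H ∧ ∀ j < n, dist y (s j).2 = dist (e (n / 2)) (s j).1 then h.choose
        else hHne.choose)
    else
      (if h : ∃ y : M, ∀ j < n, dist y (s j).1 = dist (↑(eH (n / 2)) : M) (s j).2 then h.choose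
        else hHne.choose,
       (↑(eH (n / 2)) : M)) with hnext
  set c : ℕ → M × M := fun n => seqAux next z (n + 1) n with hc
  have hcs : ∀ n j, j < n → seqAux next z n j = c j := by
    intro n j hj
    rw [hc]
    exact seqAux_stable next z n (j + 1) hj j (Nat.lt_succ_self j)
  have hstep : ∀ n, c n = next n (seqAux next z n) := by
    intro n
    rw [hc]
    simp [seqAux]
  have Inv : ∀ n, (c n).2 ∈ H ∧ ∀ j < n, dist (c n).2 (c j).2 = dist (c n).1 (c j).1 := by
    intro n
    induction n using Nat.strong_induction_on with
    | _ n ih =>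
    set s := seqAux next z n with hs
    have hsc : ∀ j < n, s j = c j := fun j hj => hcs n j hj
    have hpq : ∀ i < n, ∀ j < n, dist (s i).2 (s j).2 = dist (s i).1 (s j).1 := by
      intro i hi j hj
      rw [hsc i hi, hsc j hj]
      rcases lt_trichotomy i j with h | rfl | h
      · rw [dist_comm, (ih j hj).2 i h, dist_comm]
      · simp
      · exact (ih i hi).2 j h
    have hqH : ∀ j < n, (s j).2 ∈ H := fun j hj => by rw [hsc j hj]; exact (ih j hj).1
    by_cases hpar : n % 2 = 0
    · have hcond : ∃ y, y ∈ H ∧ ∀ j < n, dist y (s j).2 = dist (e (n / 2)) (s j).1 := by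
        obtain ⟨y, hyH, hy⟩ := extend_H hD0 hM H horb n (fun j => (s j).1) (fun j => (s j).2)
          hpq hqH (e (n / 2))
        exact ⟨y, hyH, hy⟩
      have hcn : c n = (e (n / 2), hcond.choose) := by
        rw [hstep n]
        simp only [hnext, ← hs]
        rw [if_pos hpar, dif_pos hcond]
      constructor
      · rw [hcn]; exact hcond.choose_spec.1
      · intro j hj
        rw [hcn]
        simp only
        rw [← hsc j hj]
        exact hcond.choose_spec.2 j hj
    · have hcond : ∃ y : M, ∀ j < n, dist y (s j).1 = dist (↑(eH (n / 2)) : M) (s j).2 := by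
        have hpq' : ∀ i < n, ∀ j < n, dist (s i).1 (s j).1 = dist (s i).2 (s j).2 :=
          fun i hi j hj => (hpq i hi j hj).symm
        exact extend_any hD0 hM n (fun j => (s j).2) (fun j => (s j).1) hpq' (↑(eH (n / 2)))
      have hcn : c n = (hcond.choose, (↑(eH (n / 2)) : M)) := by
        rw [hstep n]
        simp only [hnext, ← hs]
        rw [if_neg hpar, dif_pos hcond]
      constructor
      · rw [hcn]; exact (eH (n / 2)).2
      · intro j hj
        rw [hcn]
        simp only
        rw [← hsc j hj]
        exact (hcond.choose_spec j hj).symm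
  have Glob : ∀ i j, dist (c i).2 (c j).2 = dist (c i).1 (c j).1 := by
    intro i j
    rcases lt_trichotomy i j with h | rfl | h
    · rw [dist_comm, (Inv j).2 i h, dist_comm]
    · simp
    · exact (Inv i).2 j h
  have haeven : ∀ k, (c (2 * k)).1 = e k := by
    intro k
    rw [hstep (2 * k)]
    simp only [hnext]
    rw [if_pos (by omega : (2 * k) % 2 = 0)]
    simp only
    rw [show (2 * k) / 2 = k by omega]
  have hbodd : ∀ k, (c (2 * k + 1)).2 = (↑(eH k) : M) := by
    intro k
    rw [hstep (2 * k + 1)]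
    simp only [hnext]
    rw [if_neg (by omega : ¬ (2 * k + 1) % 2 = 0)]
    simp only
    rw [show (2 * k + 1) / 2 = k by omega]
  have hax : ∀ x : M, ∃ j, (c j).1 = x := by
    intro x
    obtain ⟨k, hk⟩ := he x
    exact ⟨2 * k, by rw [haeven k, hk]⟩
  refine ⟨fun x => (c (Nat.find (hax x))).2, Isometry.of_dist_eq ?_, ?_⟩
  · intro x y
    rw [Glob, Nat.find_spec (hax x), Nat.find_spec (hax y)]
  · apply Set.Subset.antisymm
    · rintro _ ⟨x, rfl⟩
      exact (Inv _).1
    · intro h hh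
      obtain ⟨k, hk⟩ := heH ⟨h, hh⟩
      refine ⟨(c (2 * k + 1)).1, ?_⟩
      have h2 : dist (c (Nat.find (hax (c (2 * k + 1)).1))).2 (c (2 * k + 1)).2 = 0 := by
        rw [Glob, Nat.find_spec (hax (c (2 * k + 1)).1), dist_self]
      have h3 := eq_of_dist_eq_zero h2
      show (c (Nat.find (hax (c (2 * k + 1)).1))).2 = h
      rw [h3, hbodd k, hk]

lemma forward (hD0 : (0:ℝ) ∈ D) (hM : IsUrysohn D M) (H : Set M) (f : M → M)
    (hf : Isometry f) (hrange : Set.range f = H) (t : Katetov D M)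
    (hdom : ↑t.dom ⊆ H) : (orb t ∩ H).Nonempty := by
  classical
  have hinj : Function.Injective f := hf.injective
  set t' : Katetov D M :=
    ⟨t.dom.preimage f hinj.injOn, fun x => t.f (f x),
      fun x hx => t.mem (f x) (Finset.mem_preimage.1 hx),
      fun x hx => t.pos (f x) (Finset.mem_preimage.1 hx),
      fun x hx y hy => by
        rw [← hf.dist_eq x y]
        exact t.ineq1 (f x) (Finset.mem_preimage.1 hx) (f y) (Finset.mem_preimage.1 hy),
      fun x hx y hy => by
        rw [← hf.dist_eq x y]
        exact t.ineq2 (f x) (Finset.mem_preimage.1 hx) (f y) (Finset.mem_preimage.1 hy)⟩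
    with ht'
  obtain ⟨y, _, hy2⟩ := orb_nonempty hD0 hM t'
  have key : ∀ x ∈ t.dom, dist (f y) x = t.f x := by
    intro x hx
    have hxr : x ∈ Set.range f := by rw [hrange]; exact hdom hx
    obtain ⟨x', rfl⟩ := hxr
    have hx' : x' ∈ t'.dom := by
      simp only [ht', Finset.mem_preimage]
      exact hx
    rw [hf.dist_eq, hy2 x' hx']
  refine ⟨f y, ⟨fun hmem => ?_, key⟩, by rw [← hrange]; exact Set.mem_range_self y⟩
  have h1 := key (f y) hmem
  rw [dist_self] at h1
  have := t.pos (f y) hmem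
  linarith

theorem statement5 (D : Set ℝ) (hD : IsUniversalDist D) (M : Type) [MetricSpace M]
    (hM : IsUrysohn D M) (H : Set M) :
    (∃ f : M → M, Isometry f ∧ Set.range f = H) ↔
      ∀ t : Katetov D M, ↑t.dom ⊆ H → (orb t ∩ H).Nonempty := by
  constructor
  · rintro ⟨f, hf, hrange⟩ t hdom
    exact forward hD.2.1 hM H f hf hrange t hdom
  · intro horb
    exact backward hD.2.1 hM H horb

end Sauer
end

section
/- Let M be a countable Urysohn metric space with finite distance set D and s a Katětov function of M. Then the set of distances realized between two (distinct) points of orb(s) is exactly {n ∈ D : 0 < n ≤ 2·rank(s)}, together with 0 for equal points. -/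
namespace Sauer

variable {D : Set ℝ} {M : Type} [MetricSpace M]

section Aux

open Classical

variable {D : Set ℝ} {M : Type} [MetricSpace M]

noncomputable def extDist (s : Katetov D M) (n : ℝ) :
    Sum {z : M // z ∈ s.dom} Bool → Sum {z : M // z ∈ s.dom} Bool → ℝ
  | .inl z, .inl w => dist z.1 w.1
  | .inl z, .inr _ => s.f z.1
  | .inr _, .inl w => s.f w.1
  | .inr a, .inr b => if a = b then 0 else n

theorem realize_aux (hD : IsUniversalDist D)
    (hM : IsUrysohn D M) (s : Katetov D M) (n : ℝ)
    (hnD : n ∈ D) (hn0 : 0 < n) (hnr : ∀ z ∈ s.dom, n ≤ 2 * s.f z) :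
    ∃ x ∈ orb s, ∃ y ∈ orb s, x ≠ y ∧ dist x y = n := by
  set X := Sum {z : M // z ∈ s.dom} Bool with hX
  letI : MetricSpace X :=
    { dist := extDist s n
      dist_self := by
        rintro (z | a)
        · exact dist_self z.1
        · simp [extDist]
      dist_comm := by
        rintro (z | a) (w | b)
        · exact dist_comm z.1 w.1
        · rfl
        · rfl
        · simp only [extDist]
          rcases eq_or_ne a b with h | h
          · simp [h]
          · simp [h, Ne.symm h]
      dist_triangle := by
        rintro (a | u) (b | v) (c | w)
        · exact dist_triangle a.1 b.1 c.1
        · have h2 := abs_le.mp (s.ineq1 a.1 a.2 b.1 b.2)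
          simp only [extDist]
          linarith [h2.2]
        · have := s.ineq2 a.1 a.2 c.1 c.2
          simpa [extDist] using this
        · simp only [extDist]
          split_ifs <;> linarith
        · have h2 := abs_le.mp (s.ineq1 b.1 b.2 c.1 c.2)
          simp only [extDist]
          linarith [h2.1]
        · simp only [extDist]
          split_ifs with h
          · linarith [s.pos b.1 b.2]
          · linarith [hnr b.1 b.2]
        · simp only [extDist]
          split_ifs <;> linarith
        · simp only [extDist]
          split_ifs with h1 h2 h3 <;>
            first
            | linarith
            | (exfalso; simp_all)
            | (split_ifs <;> linarith)
      eq_of_dist_eq_zero := by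
        rintro (z | a) (w | b) h
        · exact congrArg Sum.inl (Subtype.ext (eq_of_dist_eq_zero h))
        · exact absurd h (ne_of_gt (s.pos z.1 z.2))
        · exact absurd h (ne_of_gt (s.pos w.1 w.2))
        · simp only [extDist] at h
          split_ifs at h with hab
          · exact congrArg Sum.inr hab
          · exact absurd h (ne_of_gt hn0) }
  have hdistX : ∀ a b : X, dist a b = extDist s n a b := fun _ _ => rfl
  have hfin : Finite X := by infer_instance
  have hmemD : ∀ a b : X, dist a b ∈ D := by
    rintro (z | a) (w | b)
    · exact hM.2.1 z.1 w.1
    · exact s.mem z.1 z.2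
    · exact s.mem w.1 w.2
    · rw [hdistX]
      simp only [extDist]
      split_ifs
      · exact hD.2.1
      · exact hnD
  obtain ⟨f, hf⟩ := hM.2.2.2 X hfin hmemD
  have hfd : ∀ a b : X, dist (f a) (f b) = dist a b := fun a b => hf.dist_eq a b
  -- homogeneity
  set A : Finset M := s.dom.attach.image (fun z => f (.inl z)) with hA
  set g : M → M := fun x =>
    if h : ∃ z : {z : M // z ∈ s.dom}, f (.inl z) = x then h.choose.1 else x with hg
  have hgval : ∀ z : {z : M // z ∈ s.dom}, g (f (.inl z)) = z.1 := by
    intro z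
    have hex : ∃ w : {z : M // z ∈ s.dom}, f (.inl w) = f (.inl z) := ⟨z, rfl⟩
    rw [hg]
    simp only [hex, dif_pos]
    have := hex.choose_spec
    have h2 : (Sum.inl hex.choose : X) = Sum.inl z := hf.injective this
    have h3 : hex.choose = z := Sum.inl.inj h2
    rw [h3]
  have hgiso : ∀ x ∈ A, ∀ y ∈ A, dist (g x) (g y) = dist x y := by
    intro x hx y hy
    rw [hA] at hx hy
    simp only [Finset.mem_image, Finset.mem_attach, true_and] at hx hy
    obtain ⟨z, hz⟩ := hx
    obtain ⟨w, hw⟩ := hy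
    rw [← hz, ← hw, hgval z, hgval w, hfd]
    rfl
  obtain ⟨G, hG⟩ := hM.2.2.1 A g hgiso
  have hGz : ∀ z : {z : M // z ∈ s.dom}, G (f (.inl z)) = z.1 := by
    intro z
    have hmem : f (.inl z) ∈ A := by
      rw [hA]
      exact Finset.mem_image.mpr ⟨z, Finset.mem_attach _ _, rfl⟩
    rw [hG _ hmem, hgval]
  refine ⟨G (f (.inr true)), ?_, G (f (.inr false)), ?_, ?_, ?_⟩
  · constructor
    · intro hmem
      have := G.dist_eq (f (.inr true)) (f (.inl ⟨_, hmem⟩))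
      rw [hGz ⟨_, hmem⟩, hfd, hdistX] at this
      simp only [extDist, dist_self] at this
      exact absurd this.symm (ne_of_gt (s.pos _ hmem))
    · intro z hz
      have := G.dist_eq (f (.inr true)) (f (.inl ⟨z, hz⟩))
      rw [hGz ⟨z, hz⟩, hfd, hdistX] at this
      exact this
  · constructor
    · intro hmem
      have := G.dist_eq (f (.inr false)) (f (.inl ⟨_, hmem⟩))
      rw [hGz ⟨_, hmem⟩, hfd, hdistX] at this
      simp only [extDist, dist_self] at this
      exact absurd this.symm (ne_of_gt (s.pos _ hmem))
    · intro z hz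
      have := G.dist_eq (f (.inr false)) (f (.inl ⟨z, hz⟩))
      rw [hGz ⟨z, hz⟩, hfd, hdistX] at this
      exact this
  · intro heq
    have h1 := G.injective heq
    have h2 := hf.injective h1
    exact absurd (Sum.inr.inj h2) (by decide)
  · have := G.dist_eq (f (.inr true)) (f (.inr false))
    rw [hfd, hdistX] at this
    simpa [extDist] using this

end Aux

theorem statement7 (D : Set ℝ) (hD : IsUniversalDist D) (M : Type) [MetricSpace M]
    (hM : IsUrysohn D M) (s : Katetov D M) (hne : s.dom.Nonempty) :
    {m | ∃ x ∈ orb s, ∃ y ∈ orb s, x ≠ y ∧ dist x y = m}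
      = {n | n ∈ D ∧ 0 < n ∧ n ≤ 2 * rank s} := by
  have hfin : (s.f '' ↑s.dom).Finite := (s.dom.finite_toSet.image _)
  have hnonempty : (s.f '' ↑s.dom).Nonempty := by
    obtain ⟨z, hz⟩ := hne
    exact ⟨s.f z, z, hz, rfl⟩
  have hrank_mem : rank s ∈ s.f '' ↑s.dom := hnonempty.csInf_mem hfin
  have hrank_le : ∀ z ∈ s.dom, rank s ≤ s.f z := by
    intro z hz
    exact csInf_le hfin.bddBelow ⟨z, hz, rfl⟩
  ext m
  simp only [Set.mem_setOf_eq]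
  constructor
  · rintro ⟨x, hx, y, hy, hxy, rfl⟩
    refine ⟨hM.2.1 x y, dist_pos.mpr hxy, ?_⟩
    obtain ⟨z₀, hz₀, hz₀r⟩ := hrank_mem
    calc dist x y ≤ dist x z₀ + dist z₀ y := dist_triangle x z₀ y
      _ = s.f z₀ + s.f z₀ := by
          rw [hx.2 z₀ hz₀, dist_comm, hy.2 z₀ hz₀]
      _ = 2 * rank s := by rw [hz₀r]; ring
  · rintro ⟨hmD, hm0, hmr⟩
    have := realize_aux hD hM s m hmD hm0 (fun z hz => le_trans hmr (by
      have := hrank_le z hz; linarith))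
    obtain ⟨x, hx, y, hy, hxy, hd⟩ := this
    exact ⟨x, hx, y, hy, hxy, hd⟩

end Sauer
end

section
/- Let r be a jump number of D, M the countable Urysohn space with distance set D, and A ≠ B two equivalence classes of the relation x ~ y iff d(x,y) ≤ r. Then: (1) every distance between a point of A and a point of B exceeds 2r; (2) for every a ∈ A and every n in the set d(A,B) of realized A–B distances, there exists b ∈ B with d(a,b) = n; (3) max d(A,B) − min d(A,B) ≤ r. -/
namespace Sauer

variable {D : Set ℝ} {M : Type} [MetricSpace M]

private def dd {M : Type} [MetricSpace M] (F : Finset M) (f : M → ℝ) :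
    Option {u : M // u ∈ F} → Option {u : M // u ∈ F} → ℝ
  | some u, some v => dist u.1 v.1
  | some u, none => f u.1
  | none, some v => f v.1
  | none, none => 0

private def extSpace {M : Type} [MetricSpace M] (F : Finset M) (f : M → ℝ)
    (hpos : ∀ u ∈ F, 0 < f u)
    (h1 : ∀ u ∈ F, ∀ v ∈ F, |f u - f v| ≤ dist u v)
    (h2 : ∀ u ∈ F, ∀ v ∈ F, dist u v ≤ f u + f v) :
    MetricSpace (Option {u : M // u ∈ F}) where
  dist := dd F f
  dist_self x := by cases x <;> simp [dd]
  dist_comm x y := by cases x <;> cases y <;> simp [dd, dist_comm]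
  dist_triangle x y z := by
    rcases x with _ | u <;> rcases y with _ | v <;> rcases z with _ | w <;>
      simp only [dd]
    · norm_num
    · linarith [hpos w.1 w.2]
    · linarith [hpos v.1 v.2]
    · linarith [abs_le.mp (h1 v.1 v.2 w.1 w.2)]
    · linarith [hpos u.1 u.2]
    · exact h2 u.1 u.2 w.1 w.2
    · linarith [abs_le.mp (h1 u.1 u.2 v.1 v.2)]
    · exact dist_triangle u.1 v.1 w.1
  eq_of_dist_eq_zero := by
    intro x y h
    rcases x with _ | u <;> rcases y with _ | v <;> simp only [dd] at h
    · rfl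
    · exact absurd h (ne_of_lt (hpos v.1 v.2)).symm
    · exact absurd h (ne_of_lt (hpos u.1 u.2)).symm
    · simp [Subtype.ext (eq_of_dist_eq_zero h)]

/-- one-point extension property of the Urysohn space -/
theorem onePointExt {D : Set ℝ} {M : Type} [MetricSpace M]
    (hD0 : (0:ℝ) ∈ D) (hM : IsUrysohn D M) (F : Finset M) (f : M → ℝ)
    (hmem : ∀ u ∈ F, f u ∈ D) (hpos : ∀ u ∈ F, 0 < f u)
    (h1 : ∀ u ∈ F, ∀ v ∈ F, |f u - f v| ≤ dist u v)
    (h2 : ∀ u ∈ F, ∀ v ∈ F, dist u v ≤ f u + f v) :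
    ∃ y : M, ∀ u ∈ F, dist y u = f u := by
  letI : MetricSpace (Option {u : M // u ∈ F}) := extSpace F f hpos h1 h2
  obtain ⟨φ, hφ⟩ := hM.2.2.2 (Option {u : M // u ∈ F}) (inferInstance)
    (by
      intro x y
      rcases x with _ | u <;> rcases y with _ | v
      · exact (by simpa [dist, dd] using hD0 : dist (none : Option {u : M // u ∈ F}) none ∈ D)
      · exact (show dd F f none (some v) ∈ D from hmem v.1 v.2)
      · exact (show dd F f (some u) none ∈ D from hmem u.1 u.2)
      · exact (show dd F f (some u) (some v) ∈ D from hM.2.1 u.1 v.1))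
  have hφinj : Function.Injective φ := hφ.injective
  -- inverse map on the image of `some`
  classical
  let h : M → M := fun z =>
    if hz : ∃ u : {u : M // u ∈ F}, φ (some u) = z then (Classical.choose hz).1 else z
  have hkey : ∀ u : {u : M // u ∈ F}, h (φ (some u)) = u.1 := by
    intro u
    have hz : ∃ v : {u : M // u ∈ F}, φ (some v) = φ (some u) := ⟨u, rfl⟩
    have := Classical.choose_spec hz
    have : Classical.choose hz = u := by
      have := hφinj this
      exact Option.some_injective _ this
    simp only [h, dif_pos hz, this]
  let Aset : Finset M := Finset.univ.image (fun u : {u : M // u ∈ F} => φ (some u))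
  have hpres : ∀ x ∈ Aset, ∀ y ∈ Aset, dist (h x) (h y) = dist x y := by
    intro x hx y hy
    simp only [Aset, Finset.mem_image, Finset.mem_univ, true_and] at hx hy
    obtain ⟨u, rfl⟩ := hx
    obtain ⟨v, rfl⟩ := hy
    rw [hkey u, hkey v, hφ.dist_eq]
    rfl
  obtain ⟨g, hg⟩ := hM.2.2.1 Aset h hpres
  refine ⟨g (φ none), ?_⟩
  intro u hu
  have hmemA : φ (some ⟨u, hu⟩) ∈ Aset := by
    simp [Aset]
  have : g (φ (some ⟨u, hu⟩)) = u := by rw [hg _ hmemA, hkey]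
  calc dist (g (φ none)) u = dist (g (φ none)) (g (φ (some ⟨u, hu⟩))) := by rw [this]
    _ = dist (φ none) (φ (some ⟨u, hu⟩)) := g.isometry.dist_eq _ _
    _ = f u := by rw [hφ.dist_eq]; rfl

theorem statement9 (D : Set ℝ) (hD : IsUniversalDist D) (M : Type) [MetricSpace M]
    (hM : IsUrysohn D M) (r : ℝ) (hr : IsJump D r) (a b : M) (hab : r < dist a b)
    (A B : Set M) (hA : A = {x | dist x a ≤ r}) (hB : B = {x | dist x b ≤ r})
    (dAB : Set ℝ) (hdAB : dAB = {d | ∃ x ∈ A, ∃ y ∈ B, dist x y = d}) :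
    (∀ x ∈ A, ∀ y ∈ B, 2 * r < dist x y) ∧
    (∀ x ∈ A, ∀ n ∈ dAB, ∃ y ∈ B, dist x y = n) ∧
    sSup dAB - sInf dAB ≤ r := by
  obtain ⟨hDfin, hD0, hDnn, -⟩ := hD
  have hdistD : ∀ x y : M, dist x y ∈ D := hM.2.1
  have hr0 : 0 ≤ r := hDnn r hr.1
  have hjump : ∀ x y : M, dist x y ≤ 2 * r → dist x y ≤ r := by
    intro x y h
    by_contra hc
    push_neg at hc
    exact absurd (hr.2 _ (hdistD x y) hc) (not_lt.2 h)
  have hAcl : ∀ x ∈ A, ∀ x' ∈ A, dist x x' ≤ r := by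
    intro x hx x' hx'
    rw [hA] at hx hx'
    simp only [Set.mem_setOf_eq] at hx hx'
    refine hjump _ _ ?_
    have h1 := dist_triangle x a x'
    have h2 : dist a x' = dist x' a := dist_comm a x'
    linarith
  have hBcl : ∀ y ∈ B, ∀ y' ∈ B, dist y y' ≤ r := by
    intro y hy y' hy'
    rw [hB] at hy hy'
    simp only [Set.mem_setOf_eq] at hy hy'
    refine hjump _ _ ?_
    have h1 := dist_triangle y b y'
    have h2 : dist b y' = dist y' b := dist_comm b y'
    linarith
  have part1 : ∀ x ∈ A, ∀ y ∈ B, 2 * r < dist x y := by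
    intro x hx y hy
    by_contra hc
    push_neg at hc
    have hxy : dist x y ≤ r := hjump _ _ hc
    rw [hA] at hx
    rw [hB] at hy
    simp only [Set.mem_setOf_eq] at hx hy
    have hax : dist a x = dist x a := dist_comm a x
    have hay : dist a y ≤ r := hjump a y (by linarith [dist_triangle a x y])
    have : dist a b ≤ r := hjump a b (by linarith [dist_triangle a y b])
    linarith
  have haA : a ∈ A := by rw [hA]; simp [hr0]
  have hbB : b ∈ B := by rw [hB]; simp [hr0]
  have part2 : ∀ x ∈ A, ∀ n ∈ dAB, ∃ y ∈ B, dist x y = n := by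
    intro x hx n hn
    rw [hdAB] at hn
    obtain ⟨x', hx', y', hy', hn'⟩ := hn
    rcases eq_or_lt_of_le hr0 with hr0' | hrpos
    · -- r = 0 : classes are singletons
      have hxa : x = a := by
        rw [hA] at hx; exact dist_le_zero.mp (hr0' ▸ hx)
      have hx'a : x' = a := by
        rw [hA] at hx'; exact dist_le_zero.mp (hr0' ▸ hx')
      have hy'b : y' = b := by
        rw [hB] at hy'; exact dist_le_zero.mp (hr0' ▸ hy')
      refine ⟨b, hbB, ?_⟩
      rw [hxa, ← hx'a, ← hy'b, hn']
    · -- 0 < r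
      have h2rn : 2 * r < n := hn' ▸ part1 x' hx' y' hy'
      have hxy'gt : 2 * r < dist x y' := part1 x hx y' hy'
      have hxy'ne : x ≠ y' := by
        intro he
        rw [he, dist_self] at hxy'gt
        linarith
      classical
      set F : Finset M := {x, y'} with hF
      set f : M → ℝ := fun u => if u = x then n else r with hf
      have hfx : f x = n := if_pos rfl
      have hfy : f y' = r := if_neg (Ne.symm hxy'ne)
      have hnD : n ∈ D := hn' ▸ hdistD x' y'
      have hd1 : dist x' x ≤ r := hAcl x' hx' x hx
      have hd2 : dist x x' ≤ r := hAcl x hx x' hx'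
      have hlb : n - r ≤ dist x y' := by
        have ht := dist_triangle x' x y'
        linarith [hn' ▸ ht]
      have hub : dist x y' ≤ n + r := by
        have ht := dist_triangle x x' y'
        linarith [hn' ▸ ht]
      have hmemF : ∀ u ∈ F, u = x ∨ u = y' := by
        intro u hu
        simpa [hF] using hu
      obtain ⟨y, hy⟩ := onePointExt hD0 hM F f
        (by
          intro u hu
          rcases hmemF u hu with rfl | rfl
          · rw [hfx]; exact hnD
          · rw [hfy]; exact hr.1)
        (by
          intro u hu
          rcases hmemF u hu with rfl | rfl
          · rw [hfx]; linarith
          · rw [hfy]; exact hrpos)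
        (by
          intro u hu v hv
          rcases hmemF u hu with rfl | rfl <;> rcases hmemF v hv with rfl | rfl
          · simp
          · rw [hfx, hfy, abs_le]
            constructor <;> [skip; linarith]
            linarith [dist_nonneg (x := u) (y := v)]
          · rw [hfx, hfy, abs_le, dist_comm]
            constructor
            · linarith
            · linarith [dist_nonneg (x := u) (y := v)]
          · simp)
        (by
          intro u hu v hv
          rcases hmemF u hu with rfl | rfl <;> rcases hmemF v hv with rfl | rfl
          · rw [hfx]; simp; linarith
          · rw [hfx, hfy]; linarith
          · rw [hfx, hfy, dist_comm]; linarith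
          · rw [hfy]; simp; linarith)
      have hyx : dist y x = n := by
        have := hy x (by simp [hF])
        rwa [hfx] at this
      have hyy' : dist y y' = r := by
        have := hy y' (by simp [hF])
        rwa [hfy] at this
      have hyB : y ∈ B := by
        rw [hB]
        have hy'b : dist y' b ≤ r := by
          have := hB ▸ hy'
          simpa using this
        have : dist y b ≤ 2 * r := by
          have ht := dist_triangle y y' b
          linarith
        exact hjump y b this
      exact ⟨y, hyB, by rw [dist_comm]; exact hyx⟩
  refine ⟨part1, part2, ?_⟩
  have hne : dAB.Nonempty := ⟨dist a b, by rw [hdAB]; exact ⟨a, haA, b, hbB, rfl⟩⟩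
  have hsub : dAB ⊆ D := by
    rw [hdAB]; rintro d ⟨x, -, y, -, rfl⟩; exact hdistD x y
  have hfin : dAB.Finite := hDfin.subset hsub
  have hinf := hne.csInf_mem hfin
  have hsup2 : ∃ x ∈ A, ∃ y ∈ B, dist x y = sSup dAB := by
    have h := hne.csSup_mem hfin
    rw [hdAB] at h ⊢
    simpa using h
  obtain ⟨xs, hxs, ys, hys, hs⟩ := hsup2
  obtain ⟨ym, hym, hm⟩ := part2 xs hxs (sInf dAB) hinf
  have ht := dist_triangle xs ym ys
  have hyy : dist ym ys ≤ r := hBcl ym hym ys hys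
  linarith

end Sauer
end

section
/- Let r be a jump number of D and M the countable Urysohn space with distance set D. Define d_min(A,B) = min{d(a,b) : a ∈ A, b ∈ B} for ~-equivalence classes A, B (where x ~ y iff d(x,y) ≤ r). Then d_min satisfies the triangle inequality on the quotient M/~: for all classes A, B, C, d_min(A,B) + d_min(A,C) ≥ d_min(B,C). -/
namespace Sauer

variable {D : Set ℝ} {M : Type} [MetricSpace M]

noncomputable def qdn (d1 s d2 e t r : ℝ) : ℕ → ℕ → ℝ
  | 0, 1 => d1
  | 1, 0 => d1
  | 0, 2 => s
  | 2, 0 => s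
  | 0, 3 => d2
  | 3, 0 => d2
  | 1, 2 => e
  | 2, 1 => e
  | 1, 3 => t
  | 3, 1 => t
  | 2, 3 => r
  | 3, 2 => r
  | _, _ => 0

noncomputable def qMetric (d1 s d2 e t r : ℝ)
    (pd1 : 0 < d1) (ps : 0 < s) (pd2 : 0 < d2) (pe : 0 < e) (pt : 0 < t) (pr : 0 < r)
    (T0 : IsMetricTriple d1 e s) (T1 : IsMetricTriple d2 r s)
    (T2 : IsMetricTriple d1 d2 t) (T3 : IsMetricTriple e r t) : MetricSpace (Fin 4) :=
  { dist := fun i j => qdn d1 s d2 e t r i.val j.val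
    dist_self := by intro i; fin_cases i <;> rfl
    dist_comm := by intro i j; fin_cases i <;> fin_cases j <;> rfl
    dist_triangle := by
      obtain ⟨a1, a2, a3⟩ := T0
      obtain ⟨b1, b2, b3⟩ := T1
      obtain ⟨c1, c2, c3⟩ := T2
      obtain ⟨e1, e2, e3⟩ := T3
      intro i j k
      fin_cases i <;> fin_cases j <;> fin_cases k <;> simp [qdn] <;> linarith
    eq_of_dist_eq_zero := by
      intro i j h
      fin_cases i <;> fin_cases j <;> first | rfl | (exfalso; simp [qdn] at h; linarith) }

def ballSet (r : ℝ) (p : M) : Set M := {x | dist x p ≤ r}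

def Spq (r : ℝ) (p q : M) : Set ℝ := {d | ∃ x ∈ ballSet r p, ∃ y ∈ ballSet r q, dist x y = d}

theorem statement10 (D : Set ℝ) (hD : IsUniversalDist D) (M : Type) [MetricSpace M]
    (hM : IsUrysohn D M) (r : ℝ) (hr : IsJump D r) (a b c : M) :
    dmin {x : M | dist x b ≤ r} {x : M | dist x c ≤ r} ≤
      dmin {x : M | dist x a ≤ r} {x : M | dist x b ≤ r} +
        dmin {x : M | dist x a ≤ r} {x : M | dist x c ≤ r} := by
  classical
  obtain ⟨hDfin, hD0, hDnn, hD4⟩ := hD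
  obtain ⟨-, hMd, hMhom, hMext⟩ := hM
  obtain ⟨hrD, hrj⟩ := hr
  have hr0 : 0 ≤ r := hDnn r hrD
  have htrans : ∀ u v w : M, dist u v ≤ r → dist v w ≤ r → dist u w ≤ r := by
    intro u v w h1 h2
    by_contra h
    push_neg at h
    have h3 := hrj (dist u w) (hMd u w) h
    have h4 := dist_triangle u v w
    linarith
  have hsymm : ∀ u v : M, dist u v ≤ r → dist v u ≤ r := by
    intro u v h; rwa [dist_comm]
  have hself : ∀ p : M, p ∈ ballSet r p := by
    intro p; simp only [ballSet, Set.mem_setOf_eq, dist_self]; exact hr0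
  have hsub : ∀ p q : M, Spq r p q ⊆ D := by
    rintro p q d ⟨x, -, y, -, rfl⟩; exact hMd x y
  have hfin : ∀ p q : M, (Spq r p q).Finite := fun p q => hDfin.subset (hsub p q)
  have hne : ∀ p q : M, (Spq r p q).Nonempty := fun p q =>
    ⟨dist p q, p, hself p, q, hself q, rfl⟩
  have hbdd : ∀ p q : M, BddBelow (Spq r p q) := fun p q => (hfin p q).bddBelow
  have hmem : ∀ p q : M, sInf (Spq r p q) ∈ Spq r p q := fun p q =>
    (hne p q).csInf_mem (hfin p q)
  have hnn : ∀ p q : M, 0 ≤ sInf (Spq r p q) := fun p q =>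
    le_csInf (hne p q) (by rintro d ⟨x, -, y, -, rfl⟩; exact dist_nonneg)
  have hle : ∀ p q : M, ∀ d ∈ Spq r p q, sInf (Spq r p q) ≤ d := fun p q d hd =>
    csInf_le (hbdd p q) hd
  have hSsymm : ∀ p q : M, Spq r p q = Spq r q p := by
    intro p q; ext d
    constructor <;> rintro ⟨x, hx, y, hy, rfl⟩ <;> exact ⟨y, hy, x, hx, dist_comm y x⟩
  have hballeq : ∀ p q : M, dist p q ≤ r → ballSet r p = ballSet r q := by
    intro p q h; ext u
    constructor
    · intro hu; exact htrans u p q hu h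
    · intro hu; exact htrans u q p hu (hsymm p q h)
  show sInf (Spq r b c) ≤ sInf (Spq r a b) + sInf (Spq r a c)
  by_cases hab : dist a b ≤ r
  · have h1 : Spq r a b = Spq r b b := by unfold Spq; rw [hballeq a b hab]
    have h2 : Spq r a c = Spq r b c := by unfold Spq; rw [hballeq a b hab]
    rw [h1, h2]
    have := hnn b b
    linarith
  by_cases hac : dist a c ≤ r
  · have h1 : Spq r a b = Spq r c b := by unfold Spq; rw [hballeq a c hac]
    have h2 : Spq r a c = Spq r c c := by unfold Spq; rw [hballeq a c hac]
    rw [h1, h2, hSsymm c b]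
    have := hnn c c
    linarith
  by_cases hbc : dist b c ≤ r
  · have h0 : (0 : ℝ) ∈ Spq r b c := ⟨b, hself b, b, hbc, dist_self b⟩
    have := hle b c 0 h0
    have := hnn a b
    have := hnn a c
    linarith
  push_neg at hab hac hbc
  rcases eq_or_lt_of_le hr0 with hr' | hrpos
  · -- r = 0 : balls are singletons
    have hball0 : ∀ p : M, ballSet r p = {p} := by
      intro p; ext u
      simp [ballSet, ← hr', le_antisymm_iff, dist_nonneg, dist_eq_zero]
    have hS0 : ∀ p q : M, Spq r p q = {dist p q} := by
      intro p q; ext d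
      simp only [Spq, hball0, Set.mem_singleton_iff, Set.mem_setOf_eq]
      constructor
      · rintro ⟨x, rfl, y, rfl, rfl⟩; rfl
      · rintro rfl; exact ⟨p, rfl, q, rfl, rfl⟩
    rw [hS0, hS0, hS0, csInf_singleton, csInf_singleton, csInf_singleton]
    exact dist_triangle_left b c a
  · -- main case
    obtain ⟨x, hxA, y, hyB, hxy⟩ := hmem a b
    obtain ⟨x', hx'A, z, hzC, hx'z⟩ := hmem a c
    set d1 := sInf (Spq r a b) with hd1def
    set d2 := sInf (Spq r a c) with hd2def
    have hcross : ∀ p q u v : M, r < dist p q → u ∈ ballSet r p → v ∈ ballSet r q →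
        r < dist u v := by
      intro p q u v hpq hu hv
      by_contra h
      push_neg at h
      have : dist p q ≤ r := htrans p u q (hsymm u p hu) (htrans u v q h hv)
      linarith
    have hd1r : r < dist x y := hcross a b x y hab hxA hyB
    have hd2r : r < dist x' z := hcross a c x' z hac hx'A hzC
    have her : r < dist y z := hcross b c y z hbc hyB hzC
    have hsr : r < dist x z := hcross a c x z hac hxA hzC
    have hxx' : dist x x' ≤ r := htrans x a x' hxA (hsymm x' a hx'A)
    have hsd2 : d2 ≤ dist x z := hle a c _ ⟨x, hxA, z, hzC, rfl⟩
    have hsle : dist x z ≤ d2 + r := by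
      have h1 := dist_triangle x x' z
      rw [hx'z] at h1
      linarith
    have hd2pos : 0 < d2 := by rw [← hx'z]; linarith
    have T0 : IsMetricTriple (dist x y) (dist y z) (dist x z) := by
      refine ⟨?_, ?_, ?_⟩
      · have h := dist_triangle x z y
        rw [dist_comm z y] at h; linarith
      · have h := dist_triangle y x z
        rw [dist_comm y x] at h; linarith
      · exact dist_triangle x y z
    have T1 : IsMetricTriple d2 r (dist x z) := ⟨by linarith, by linarith, by linarith⟩
    have hd2D : d2 ∈ D := by rw [← hx'z]; exact hMd x' z
    obtain ⟨t, htD, htpos, ht1, ht2⟩ :=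
      hD4 (dist x z) (dist x y) (dist y z) d2 r (hMd x z) (hMd x y) (hMd y z) hd2D hrD
        (by linarith) (by linarith) hd2pos hrpos T0 T1
    -- build the 4-point metric space
    letI inst : MetricSpace (Fin 4) :=
      qMetric (dist x y) (dist x z) d2 (dist y z) t r (by linarith) (by linarith) hd2pos
        (by linarith) htpos hrpos T0 T1 ht1 ht2
    have q01 : dist (0 : Fin 4) (1 : Fin 4) = dist x y := rfl
    have q02 : dist (0 : Fin 4) (2 : Fin 4) = dist x z := rfl
    have q10 : dist (1 : Fin 4) (0 : Fin 4) = dist x y := rfl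
    have q12 : dist (1 : Fin 4) (2 : Fin 4) = dist y z := rfl
    have q20 : dist (2 : Fin 4) (0 : Fin 4) = dist x z := rfl
    have q21 : dist (2 : Fin 4) (1 : Fin 4) = dist y z := rfl
    have q00 : dist (0 : Fin 4) (0 : Fin 4) = (0 : ℝ) := rfl
    have q11 : dist (1 : Fin 4) (1 : Fin 4) = (0 : ℝ) := rfl
    have q22 : dist (2 : Fin 4) (2 : Fin 4) = (0 : ℝ) := rfl
    have q13 : dist (1 : Fin 4) (3 : Fin 4) = t := rfl
    have q32 : dist (3 : Fin 4) (2 : Fin 4) = r := rfl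
    have hDist4 : ∀ i j : Fin 4, dist i j ∈ D := by
      intro i j
      fin_cases i <;> fin_cases j <;>
        first
          | exact hD0
          | exact hMd x y
          | exact hMd x z
          | exact hMd y z
          | exact hd2D
          | exact htD
          | exact hrD
    obtain ⟨f, hf⟩ := hMext (Fin 4) (Finite.of_fintype _) hDist4
    have hfd : ∀ i j : Fin 4, dist (f i) (f j) = dist i j := fun i j => hf.dist_eq i j
    have hinj : Function.Injective f := hf.injective
    have h10 : f 1 ≠ f 0 := fun h => absurd (hinj h) (by decide)
    have h20 : f 2 ≠ f 0 := fun h => absurd (hinj h) (by decide)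
    have h21 : f 2 ≠ f 1 := fun h => absurd (hinj h) (by decide)
    set φ : M → M := fun m => if m = f 0 then x else if m = f 1 then y else
      if m = f 2 then z else m with hφdef
    have hφ0 : φ (f 0) = x := by simp [hφdef]
    have hφ1 : φ (f 1) = y := by simp [hφdef, h10]
    have hφ2 : φ (f 2) = z := by simp [hφdef, h20, h21]
    have hpres : ∀ u ∈ ({f 0, f 1, f 2} : Finset M), ∀ v ∈ ({f 0, f 1, f 2} : Finset M),
        dist (φ u) (φ v) = dist u v := by
      intro u hu v hv
      simp only [Finset.mem_insert, Finset.mem_singleton] at hu hv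
      rcases hu with rfl | rfl | rfl <;> rcases hv with rfl | rfl | rfl <;>
        simp [hφ0, hφ1, hφ2, hfd, q00, q01, q02, q10, q11, q12, q20, q21, q22, dist_comm]
    obtain ⟨g, hg⟩ := hMhom {f 0, f 1, f 2} φ hpres
    have hg1 : g (f 1) = y := by
      have := hg (f 1) (by simp)
      rw [this, hφ1]
    have hg2 : g (f 2) = z := by
      have := hg (f 2) (by simp)
      rw [this, hφ2]
    set z' := g (f 3) with hz'def
    have hz'z : dist z' z = r := by
      have h := IsometryEquiv.dist_eq g (f 3) (f 2)
      rw [hg2] at h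
      rw [hz'def, h, hfd, q32]
    have hyz' : dist y z' = t := by
      have h := IsometryEquiv.dist_eq g (f 1) (f 3)
      rw [hg1] at h
      exact h.trans ((hfd 1 3).trans q13)
    have hz'C : z' ∈ ballSet r c := htrans z' z c (le_of_eq hz'z) hzC
    have hfinal : sInf (Spq r b c) ≤ dist y z' := hle b c _ ⟨y, hyB, z', hz'C, rfl⟩
    have htle : t ≤ dist x y + d2 := ht1.2.2
    rw [hxy] at htle
    rw [hyz'] at hfinal
    linarith

end Sauer
end

section
/- Let M be a countable Urysohn space with finite distance set D, A ⊆ M finite, and (t_i)_{i<s} Katětov functions with domain A. Let d'' be a metric on the index set {0,…,s−1} with d''(i,j) ∈ d(t_i, t_j) for all i ≠ j. Then the distance function d' on A ∪ {0,…,s−1} defined by d' = d on A, d' = d'' on indices, and d'(x,i) = t_i(x), is a metric; moreover any partial isometry of A ∪ C (C a subset of indices) into M fixing A pointwise extends to an isometry α of the whole space into M with α(i) ∈ orb(t_i) for all i. -/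
namespace Sauer

variable {D : Set ℝ} {M : Type} [MetricSpace M]

noncomputable def spDist2 {s : ℕ} (t : Fin s → Katetov D M)
    (d'' : Fin s → Fin s → ℝ) : M ⊕ Fin s → M ⊕ Fin s → ℝ
  | .inl x, .inl y => dist x y
  | .inl x, .inr i => (t i).f x
  | .inr i, .inl x => (t i).f x
  | .inr i, .inr j => d'' i j

def pts (A : Finset M) (s : ℕ) : Set (M ⊕ Fin s) :=
  (Sum.inl '' (A : Set M)) ∪ Set.range (Sum.inr : Fin s → M ⊕ Fin s)


/-- A fresh wrapper type carrying no ambient instances. -/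
def Vert (M : Type) (A : Finset M) (s : ℕ) : Type := {x // x ∈ A} ⊕ Fin s

def Vert.inl {M : Type} {A : Finset M} {s : ℕ} (x : {x // x ∈ A}) : Vert M A s := Sum.inl x

def Vert.inr {M : Type} {A : Finset M} {s : ℕ} (i : Fin s) : Vert M A s := Sum.inr i

def Vert.toSum {M : Type} {A : Finset M} {s : ℕ} : Vert M A s → M ⊕ Fin s :=
  Sum.map Subtype.val id

lemma Vert.cases {M : Type} {A : Finset M} {s : ℕ} (v : Vert M A s) :
    (∃ x : {x // x ∈ A}, v = Vert.inl x) ∨ (∃ i : Fin s, v = Vert.inr i) := by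
  obtain x | i := v
  · exact Or.inl ⟨x, rfl⟩
  · exact Or.inr ⟨i, rfl⟩

instance {M : Type} {A : Finset M} {s : ℕ} : Finite (Vert M A s) :=
  inferInstanceAs (Finite ({x // x ∈ A} ⊕ Fin s))

/-- Auxiliary: the triangle inequality (part 1). -/
lemma part1_aux (s : ℕ) (t : Fin s → Katetov D M) (A : Finset M)
    (hdom : ∀ i, (t i).dom = A)
    (d'' : Fin s → Fin s → ℝ)
    (h0 : ∀ i, d'' i i = 0) (hsym : ∀ i j, d'' i j = d'' j i)
    (htri : ∀ i j k, d'' i k ≤ d'' i j + d'' j k)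
    (hmem : ∀ i j, i ≠ j → d'' i j ∈ orbDistSet (t i) (t j)) :
    ∀ p ∈ pts A s, ∀ q ∈ pts A s, ∀ w ∈ pts A s,
        spDist2 t d'' p w ≤ spDist2 t d'' p q + spDist2 t d'' q w := by
  have hA : ∀ (i : Fin s), ∀ x ∈ A, x ∈ (t i).dom := fun i x hx => by rw [hdom]; exact hx
  have hpos : ∀ (i : Fin s), ∀ x ∈ A, 0 < (t i).f x := fun i x hx => (t i).pos x (hA i x hx)
  have key1 : ∀ i j : Fin s, ∀ x ∈ A, d'' i j ≤ (t i).f x + (t j).f x := by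
    intro i j x hx
    by_cases hij : i = j
    · subst hij; rw [h0]; have := hpos i x hx; linarith
    · obtain ⟨u, ⟨hu1, hu2⟩, v, ⟨hv1, hv2⟩, huv⟩ := hmem i j hij
      have h1 : dist u x = (t i).f x := hu2 x (hA i x hx)
      have h2 : dist v x = (t j).f x := hv2 x (hA j x hx)
      calc d'' i j = dist u v := huv.symm
        _ ≤ dist u x + dist x v := dist_triangle u x v
        _ = (t i).f x + (t j).f x := by rw [h1, dist_comm, h2]
  have key2 : ∀ i j : Fin s, ∀ x ∈ A, (t i).f x ≤ d'' i j + (t j).f x := by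
    intro i j x hx
    by_cases hij : i = j
    · subst hij; rw [h0]; linarith
    · obtain ⟨u, ⟨hu1, hu2⟩, v, ⟨hv1, hv2⟩, huv⟩ := hmem i j hij
      have h1 : dist u x = (t i).f x := hu2 x (hA i x hx)
      have h2 : dist v x = (t j).f x := hv2 x (hA j x hx)
      calc (t i).f x = dist u x := h1.symm
        _ ≤ dist u v + dist v x := dist_triangle u v x
        _ = d'' i j + (t j).f x := by rw [huv, h2]
  rintro p (⟨x, hx, rfl⟩ | ⟨i, rfl⟩) q (⟨y, hy, rfl⟩ | ⟨j, rfl⟩) w (⟨z, hz, rfl⟩ | ⟨k, rfl⟩) <;>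
    simp only [spDist2]
  · exact dist_triangle x y z
  · have h := (t k).ineq1 x (hA k x hx) y (hA k y hy)
    have := le_trans (le_abs_self _) h
    linarith
  · exact (t j).ineq2 x (hA j x hx) z (hA j z hz)
  · have := key2 k j x hx
    rw [hsym k j] at this
    linarith
  · have h := (t i).ineq1 y (hA i y hy) z (hA i z hz)
    have := le_trans (neg_le_abs _) h
    linarith
  · exact key1 i k y hy
  · exact key2 i j z hz
  · exact htri i j k

theorem statement12 (D : Set ℝ) (hD : IsUniversalDist D) (M : Type) [MetricSpace M]
    (hM : IsUrysohn D M) (s : ℕ) (t : Fin s → Katetov D M) (A : Finset M)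
    (hdom : ∀ i, (t i).dom = A)
    (d'' : Fin s → Fin s → ℝ)
    (h0 : ∀ i, d'' i i = 0) (hsym : ∀ i j, d'' i j = d'' j i)
    (htri : ∀ i j k, d'' i k ≤ d'' i j + d'' j k)
    (hmem : ∀ i j, i ≠ j → d'' i j ∈ orbDistSet (t i) (t j)) :
    (∀ p ∈ pts A s, ∀ q ∈ pts A s, ∀ w ∈ pts A s,
        spDist2 t d'' p w ≤ spDist2 t d'' p q + spDist2 t d'' q w) ∧
    ∀ (C : Finset (Fin s)) (β : Fin s → M),
      (∀ i ∈ C, ∀ x ∈ A, dist (β i) x = (t i).f x) →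
      (∀ i ∈ C, ∀ j ∈ C, dist (β i) (β j) = d'' i j) →
      ∃ α : Fin s → M, (∀ i ∈ C, α i = β i) ∧ (∀ i, α i ∈ orb (t i)) ∧
        ∀ i j, dist (α i) (α j) = d'' i j := by
  classical
  have part1 := part1_aux s t A hdom d'' h0 hsym htri hmem
  refine ⟨part1, ?_⟩
  intro C β hβA hβC
  have hA : ∀ (i : Fin s), ∀ x ∈ A, x ∈ (t i).dom := fun i x hx => by rw [hdom]; exact hx
  have hpos : ∀ (i : Fin s), ∀ x ∈ A, 0 < (t i).f x := fun i x hx => (t i).pos x (hA i x hx)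
  -- the auxiliary finite pseudometric space
  set X := Vert M A s with hX
  set dX : X → X → ℝ := fun a b => spDist2 t d'' a.toSum b.toSum with hdX
  have hmemPts : ∀ a : X, a.toSum ∈ pts A s := by
    intro a
    obtain ⟨⟨x, hx⟩, rfl⟩ | ⟨i, rfl⟩ := a.cases
    · exact Or.inl ⟨x, hx, rfl⟩
    · exact Or.inr ⟨i, rfl⟩
  letI instX : PseudoMetricSpace X :=
    { dist := dX
      dist_self := by
        intro a
        obtain ⟨⟨x, hx⟩, rfl⟩ | ⟨i, rfl⟩ := a.cases <;>
          simp [hdX, Vert.inl, Vert.inr, Vert.toSum, Sum.map_inl, Sum.map_inr, spDist2, h0]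
      dist_comm := by
        intro a b
        obtain ⟨⟨x, hx⟩, rfl⟩ | ⟨i, rfl⟩ := a.cases <;>
          obtain ⟨⟨y, hy⟩, rfl⟩ | ⟨j, rfl⟩ := b.cases <;>
          simp [hdX, Vert.inl, Vert.inr, Vert.toSum, Sum.map_inl, Sum.map_inr, spDist2, dist_comm, hsym]
      dist_triangle := fun a b c =>
        part1 _ (hmemPts a) _ (hmemPts b) _ (hmemPts c) }
  haveI : Finite (SeparationQuotient X) := Quotient.finite _
  have hXdist : ∀ a b : X, dist a b = spDist2 t d'' a.toSum b.toSum := fun a b => rfl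
  have hdistD : ∀ p q : SeparationQuotient X, dist p q ∈ D := by
    intro p q
    obtain ⟨a, rfl⟩ := SeparationQuotient.surjective_mk p
    obtain ⟨b, rfl⟩ := SeparationQuotient.surjective_mk q
    rw [SeparationQuotient.dist_mk, hXdist]
    obtain ⟨⟨x, hx⟩, rfl⟩ | ⟨i, rfl⟩ := a.cases <;>
      obtain ⟨⟨y, hy⟩, rfl⟩ | ⟨j, rfl⟩ := b.cases <;>
      simp only [Vert.inl, Vert.inr, Vert.toSum, Sum.map_inl, Sum.map_inr, spDist2, id_eq]
    · exact hM.2.1 x y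
    · exact (t j).mem x (hA j x hx)
    · exact (t i).mem y (hA i y hy)
    · by_cases hij : i = j
      · subst hij; rw [h0]; exact hD.2.1
      · obtain ⟨u, _, v, _, huv⟩ := hmem i j hij
        rw [← huv]; exact hM.2.1 u v
  obtain ⟨f, hf⟩ := hM.2.2.2 (SeparationQuotient X) ‹_› hdistD
  set φ : X → M := fun a => f (SeparationQuotient.mk a) with hφdef
  have hφ : ∀ a b : X, dist (φ a) (φ b) = spDist2 t d'' a.toSum b.toSum := by
    intro a b
    rw [hφdef]
    simp only
    rw [hf.dist_eq, SeparationQuotient.dist_mk]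
    exact hXdist a b
  -- the partial map to extend by homogeneity
  set g₀ : M → M := fun y =>
    if h : ∃ i, i ∈ C ∧ φ (Vert.inr i) = y then β (Classical.choose h)
    else if h2 : ∃ x : {x // x ∈ A}, φ (Vert.inl x) = y then (Classical.choose h2).1
    else y with hg₀def
  have hφri : ∀ (i j : Fin s), dist (φ (Vert.inr i)) (φ (Vert.inr j)) = d'' i j := by
    intro i j
    rw [hφ]
    simp [Vert.inr, Vert.toSum, Sum.map_inr, spDist2]
  have hφli : ∀ (x : {x // x ∈ A}) (i : Fin s),
      dist (φ (Vert.inl x)) (φ (Vert.inr i)) = (t i).f x := by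
    intro x i
    rw [hφ]
    simp [Vert.inl, Vert.inr, Vert.toSum, Sum.map_inl, Sum.map_inr, spDist2]
  have hφll : ∀ (x y : {x // x ∈ A}),
      dist (φ (Vert.inl x)) (φ (Vert.inl y)) = dist (x : M) (y : M) := by
    intro x y
    rw [hφ]
    simp [Vert.inl, Vert.toSum, Sum.map_inl, spDist2]
  have gβ : ∀ i ∈ C, g₀ (φ (Vert.inr i)) = β i := by
    intro i hi
    have h : ∃ j, j ∈ C ∧ φ (Vert.inr j) = φ (Vert.inr i) := ⟨i, hi, rfl⟩
    rw [hg₀def]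
    simp only [dif_pos h]
    obtain ⟨hjC, hjφ⟩ := Classical.choose_spec h
    have hd : dist (β (Classical.choose h)) (β i) = 0 := by
      rw [hβC _ hjC i hi, ← hφri (Classical.choose h) i, hjφ, dist_self]
    exact dist_eq_zero.mp hd
  have gA : ∀ x : {x // x ∈ A}, g₀ (φ (Vert.inl x)) = (x : M) := by
    intro x
    have h : ¬ ∃ i, i ∈ C ∧ φ (Vert.inr i) = φ (Vert.inl x) := by
      rintro ⟨i, hi, hφeq⟩
      have h1 : dist (φ (Vert.inl x)) (φ (Vert.inr i)) = 0 := by rw [hφeq, dist_self]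
      rw [hφli] at h1
      have hp := hpos i x x.2
      linarith
    have h2 : ∃ y : {x // x ∈ A}, φ (Vert.inl y) = φ (Vert.inl x) := ⟨x, rfl⟩
    rw [hg₀def]
    simp only [dif_neg h, dif_pos h2]
    have hyφ := Classical.choose_spec h2
    have hd : dist (Classical.choose h2).1 (x : M) = 0 := by
      rw [← hφll, hyφ, dist_self]
    exact dist_eq_zero.mp hd
  -- homogeneity
  set S : Finset M :=
    A.attach.image (fun x => φ (Vert.inl x)) ∪ C.image (fun i => φ (Vert.inr i)) with hSdef
  have hSmem : ∀ u ∈ S, (∃ x : {x // x ∈ A}, u = φ (Vert.inl x)) ∨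
      (∃ i, i ∈ C ∧ u = φ (Vert.inr i)) := by
    intro u hu
    rw [hSdef, Finset.mem_union] at hu
    rcases hu with hu | hu
    · obtain ⟨x, _, rfl⟩ := Finset.mem_image.mp hu
      exact Or.inl ⟨x, rfl⟩
    · obtain ⟨i, hi, rfl⟩ := Finset.mem_image.mp hu
      exact Or.inr ⟨i, hi, rfl⟩
  have hiso : ∀ u ∈ S, ∀ v ∈ S, dist (g₀ u) (g₀ v) = dist u v := by
    intro u hu v hv
    rcases hSmem u hu with ⟨x, rfl⟩ | ⟨i, hi, rfl⟩ <;>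
      rcases hSmem v hv with ⟨y, rfl⟩ | ⟨j, hj, rfl⟩
    · rw [gA x, gA y, hφll]
    · rw [gA x, gβ j hj, hφli, dist_comm]
      exact hβA j hj x x.2
    · rw [gβ i hi, gA y, dist_comm (φ (Vert.inr i)), hφli]
      exact hβA i hi y y.2
    · rw [gβ i hi, gβ j hj, hφri]
      exact hβC i hi j hj
  obtain ⟨g, hg⟩ := hM.2.2.1 S g₀ hiso
  refine ⟨fun i => g (φ (Vert.inr i)), ?_, ?_, ?_⟩
  · intro i hi
    have hmem' : φ (Vert.inr i) ∈ S := by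
      rw [hSdef, Finset.mem_union]
      exact Or.inr (Finset.mem_image.mpr ⟨i, hi, rfl⟩)
    show g (φ (Vert.inr i)) = β i
    rw [hg _ hmem', gβ i hi]
  · intro i
    show g (φ (Vert.inr i)) ∈ orb (t i)
    have hdistA : ∀ x ∈ A, dist (g (φ (Vert.inr i))) x = (t i).f x := by
      intro x hx
      have hmem' : φ (Vert.inl (⟨x, hx⟩ : {x // x ∈ A})) ∈ S := by
        rw [hSdef, Finset.mem_union]
        exact Or.inl (Finset.mem_image.mpr ⟨⟨x, hx⟩, A.mem_attach _, rfl⟩)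
      have hx' : x = g (φ (Vert.inl (⟨x, hx⟩ : {x // x ∈ A}))) := by
        rw [hg _ hmem', gA]
      rw [hx', g.dist_eq, dist_comm, hφli, ← hx']
    constructor
    · intro hmem'
      rw [hdom] at hmem'
      have h1 := hdistA _ hmem'
      rw [dist_self] at h1
      have := hpos i _ hmem'
      linarith
    · intro x hx
      exact hdistA x (by rw [← hdom i]; exact hx)
  · intro i j
    show dist (g (φ (Vert.inr i))) (g (φ (Vert.inr j))) = d'' i j
    rw [g.dist_eq, hφri]

end Sauer
end

section
/- Let M be a countable Urysohn space with finite universal distance set D whose first block has minimum 1, A ⊆ M finite, and s, t Katětov functions with domain A with rank(s) ≥ r⁻ and rank(t) ≥ 1, where r ∈ D lies in the first block B of D with 1 ≤ r⁻ < r (r⁻ the predecessor of r in D). Then d_max(s,t) ≥ r, i.e., there exist x ∈ orb(s) and y ∈ orb(t) with d(x,y) ≥ r. -/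
namespace Sauer

variable {D : Set ℝ} {M : Type} [MetricSpace M]

noncomputable def eD (s t : Katetov D M) (d : ℝ) :
    Bool ⊕ {a : M // a ∈ s.dom} → Bool ⊕ {a : M // a ∈ s.dom} → ℝ
  | .inl false, .inl false => 0
  | .inl true, .inl true => 0
  | .inl false, .inl true => d
  | .inl true, .inl false => d
  | .inl false, .inr a => s.f a.1
  | .inl true, .inr a => t.f a.1
  | .inr a, .inl false => s.f a.1
  | .inr a, .inl true => t.f a.1
  | .inr a, .inr b => dist a.1 b.1

lemma exists_orb_pair (h0D : (0:ℝ) ∈ D) (hM : IsUrysohn D M) (s t : Katetov D M)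
    (hst : t.dom = s.dom) (d : ℝ) (hdD : d ∈ D) (hd0 : 0 < d)
    (hL1 : ∀ a ∈ s.dom, s.f a ≤ d + t.f a)
    (hL2 : ∀ a ∈ s.dom, t.f a ≤ d + s.f a)
    (hU : ∀ a ∈ s.dom, d ≤ s.f a + t.f a) :
    ∃ x ∈ orb s, ∃ y ∈ orb t, dist x y = d := by
  classical
  -- helper facts on the subtype
  have hsposS : ∀ a : {a : M // a ∈ s.dom}, 0 < s.f a.1 := fun a => s.pos a.1 a.2
  have htmem : ∀ a : {a : M // a ∈ s.dom}, a.1 ∈ t.dom := fun a => by rw [hst]; exact a.2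
  have htposS : ∀ a : {a : M // a ∈ s.dom}, 0 < t.f a.1 := fun a => t.pos a.1 (htmem a)
  have Hs1 : ∀ a b : {a : M // a ∈ s.dom}, s.f a.1 ≤ dist a.1 b.1 + s.f b.1 := by
    intro a b
    have := abs_le.1 (s.ineq1 a.1 a.2 b.1 b.2)
    linarith [this.2]
  have Hs2 : ∀ a b : {a : M // a ∈ s.dom}, dist a.1 b.1 ≤ s.f a.1 + s.f b.1 :=
    fun a b => s.ineq2 a.1 a.2 b.1 b.2
  have Ht1 : ∀ a b : {a : M // a ∈ s.dom}, t.f a.1 ≤ dist a.1 b.1 + t.f b.1 := by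
    intro a b
    have := abs_le.1 (t.ineq1 a.1 (htmem a) b.1 (htmem b))
    linarith [this.2]
  have Ht2 : ∀ a b : {a : M // a ∈ s.dom}, dist a.1 b.1 ≤ t.f a.1 + t.f b.1 :=
    fun a b => t.ineq2 a.1 (htmem a) b.1 (htmem b)
  have HL1 : ∀ a : {a : M // a ∈ s.dom}, s.f a.1 ≤ d + t.f a.1 := fun a => hL1 a.1 a.2
  have HL2 : ∀ a : {a : M // a ∈ s.dom}, t.f a.1 ≤ d + s.f a.1 := fun a => hL2 a.1 a.2
  have HU : ∀ a : {a : M // a ∈ s.dom}, d ≤ s.f a.1 + t.f a.1 := fun a => hU a.1 a.2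
  set N := (Bool ⊕ {a : M // a ∈ s.dom}) with hN
  letI mN : MetricSpace N :=
    { dist := eD s t d
      dist_self := by
        rintro ((_|_) | a) <;> simp [eD]
      dist_comm := by
        rintro ((_|_) | a) ((_|_) | b) <;> simp [eD, dist_comm, eq_comm]
      dist_triangle := by
        rintro ((_|_) | ax) ((_|_) | az) ((_|_) | ay) <;>
          simp only [eD] <;>
          first
          | rfl
          | linarith [hd0]
          | linarith [HL1 ay, HL2 ay, HU ay, hsposS ay, htposS ay, hd0]
          | linarith [HL1 ax, HL2 ax, HU ax, hsposS ax, htposS ax, hd0]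
          | linarith [HL1 az, HL2 az, HU az, hsposS az, htposS az, hd0]
          | linarith [Hs1 ax ay, Hs1 ay ax, Hs2 ax ay, Ht1 ax ay, Ht1 ay ax, Ht2 ax ay,
              HL1 ax, HL1 ay, HL2 ax, HL2 ay, HU ax, HU ay, hd0, dist_comm ax.1 ay.1]
          | linarith [Hs1 ax az, Hs1 az ax, Hs2 ax az, Ht1 ax az, Ht1 az ax, Ht2 ax az,
              HL1 ax, HL1 az, HL2 ax, HL2 az, HU ax, HU az, hd0, dist_comm ax.1 az.1]
          | linarith [Hs1 az ay, Hs1 ay az, Hs2 az ay, Ht1 az ay, Ht1 ay az, Ht2 az ay,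
              HL1 az, HL1 ay, HL2 az, HL2 ay, HU az, HU ay, hd0, dist_comm az.1 ay.1]
          | exact dist_triangle ax.1 az.1 ay.1
      eq_of_dist_eq_zero := by
        rintro ((_|_) | a) ((_|_) | b) h <;>
          simp only [eD] at h <;>
          first
          | rfl
          | (exact absurd h (by linarith [hd0]))
          | (exact absurd h (by linarith [hsposS a, htposS a]))
          | (exact absurd h (by linarith [hsposS b, htposS b]))
          | (exact congrArg Sum.inr (Subtype.ext (dist_eq_zero.1 h))) }
  have hdistD : ∀ x y : N, dist x y ∈ D := by
    rintro ((_|_) | a) ((_|_) | b) <;>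
      change eD s t d _ _ ∈ D <;> simp only [eD] <;>
      first
      | exact h0D
      | exact hdD
      | exact s.mem b.1 b.2
      | exact s.mem a.1 a.2
      | exact t.mem b.1 (htmem b)
      | exact t.mem a.1 (htmem a)
      | exact hM.2.1 a.1 b.1
  obtain ⟨f, hf⟩ := hM.2.2.2 N (by infer_instance) hdistD
  have hfinj : Function.Injective f := by
    intro a b hab
    have : dist a b = 0 := by rw [← hf.dist_eq a b, hab, dist_self]
    exact eq_of_dist_eq_zero this
  -- the image of the domain
  set F : Finset M := s.dom.attach.image (fun a => f (Sum.inr a)) with hF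
  set φ : M → M := fun m =>
    if h : ∃ a : {a : M // a ∈ s.dom}, f (Sum.inr a) = m then (h.choose.1) else m with hφdef
  have hφ : ∀ a : {a : M // a ∈ s.dom}, φ (f (Sum.inr a)) = a.1 := by
    intro a
    have h : ∃ a' : {a : M // a ∈ s.dom}, f (Sum.inr a') = f (Sum.inr a) := ⟨a, rfl⟩
    have := h.choose_spec
    have h2 : h.choose = a := by
      have := hfinj this
      exact Sum.inr.inj this
    simp only [hφdef, dif_pos h, h2]
  have hmemF : ∀ x ∈ F, ∃ a : {a : M // a ∈ s.dom}, x = f (Sum.inr a) := by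
    intro x hx
    simp only [hF, Finset.mem_image, Finset.mem_attach, true_and] at hx
    obtain ⟨a, ha⟩ := hx
    exact ⟨a, ha.symm⟩
  obtain ⟨g, hg⟩ := hM.2.2.1 F φ (by
    intro x hx y hy
    obtain ⟨a, rfl⟩ := hmemF x hx
    obtain ⟨b, rfl⟩ := hmemF y hy
    rw [hφ a, hφ b, hf.dist_eq]
    rfl)
  have hga : ∀ a : {a : M // a ∈ s.dom}, g (f (Sum.inr a)) = a.1 := by
    intro a
    have hmem : f (Sum.inr a) ∈ F := Finset.mem_image.2 ⟨a, Finset.mem_attach _ _, rfl⟩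
    rw [hg _ hmem, hφ a]
  refine ⟨g (f (Sum.inl false)), ⟨?_, ?_⟩, g (f (Sum.inl true)), ⟨?_, ?_⟩, ?_⟩
  · intro hmem
    have h2 : g (f (Sum.inr ⟨g (f (Sum.inl false)), hmem⟩)) = g (f (Sum.inl false)) := hga _
    have h3 : (Sum.inl false : N) = Sum.inr ⟨g (f (Sum.inl false)), hmem⟩ :=
      hfinj (g.injective h2.symm)
    exact Sum.inl_ne_inr h3
  · intro a ha
    have h2 : g (f (Sum.inr ⟨a, ha⟩)) = a := hga _
    calc dist (g (f (Sum.inl false))) a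
        = dist (g (f (Sum.inl false))) (g (f (Sum.inr ⟨a, ha⟩))) := congrArg _ h2.symm
      _ = dist (f (Sum.inl false)) (f (Sum.inr ⟨a, ha⟩)) := g.dist_eq _ _
      _ = dist (Sum.inl false : N) (Sum.inr ⟨a, ha⟩) := hf.dist_eq _ _
      _ = s.f a := rfl
  · intro hmem
    have hmem' : g (f (Sum.inl true)) ∈ s.dom := by rwa [hst] at hmem
    have h2 : g (f (Sum.inr ⟨g (f (Sum.inl true)), hmem'⟩)) = g (f (Sum.inl true)) := hga _
    have h3 : (Sum.inl true : N) = Sum.inr ⟨g (f (Sum.inl true)), hmem'⟩ :=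
      hfinj (g.injective h2.symm)
    exact Sum.inl_ne_inr h3
  · intro a ha
    have ha' : a ∈ s.dom := by rwa [hst] at ha
    have h2 : g (f (Sum.inr ⟨a, ha'⟩)) = a := hga _
    calc dist (g (f (Sum.inl true))) a
        = dist (g (f (Sum.inl true))) (g (f (Sum.inr ⟨a, ha'⟩))) := congrArg _ h2.symm
      _ = dist (f (Sum.inl true)) (f (Sum.inr ⟨a, ha'⟩)) := g.dist_eq _ _
      _ = dist (Sum.inl true : N) (Sum.inr ⟨a, ha'⟩) := hf.dist_eq _ _
      _ = t.f a := rfl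
  · calc dist (g (f (Sum.inl false))) (g (f (Sum.inl true)))
        = dist (f (Sum.inl false)) (f (Sum.inl true)) := g.dist_eq _ _
      _ = dist (Sum.inl false : N) (Sum.inl true) := hf.dist_eq _ _
      _ = d := rfl


theorem statement14 (D : Set ℝ) (hD : IsUniversalDist D)
    (h1 : (1 : ℝ) ∈ D) (hmin : ∀ d ∈ D, 0 < d → (1 : ℝ) ≤ d)
    (B : Set ℝ) (hB : IsBlock D B) (h1B : (1 : ℝ) ∈ B)
    (M : Type) [MetricSpace M] (hM : IsUrysohn D M)
    (r : ℝ) (hrB : r ∈ B) (hpred1 : (1 : ℝ) ≤ dpred D r) (hpred2 : dpred D r < r)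
    (A : Finset M) (s t : Katetov D M) (hs : s.dom = A) (ht : t.dom = A)
    (hranks : dpred D r ≤ rank s) (hrankt : (1 : ℝ) ≤ rank t) :
    ∃ x ∈ orb s, ∃ y ∈ orb t, r ≤ dist x y := by
  classical
  obtain ⟨hDfin, h0D, hDnonneg, hD4⟩ := hD
  have hAne : A.Nonempty := by
    by_contra h
    rw [Finset.not_nonempty_iff_eq_empty] at h
    have h0 : rank s = 0 := by
      rw [rank, hs, h]
      simp [Real.sInf_empty]
    rw [h0] at hranks
    linarith
  have hsrank : ∀ a ∈ A, dpred D r ≤ s.f a := by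
    intro a ha
    refine le_trans hranks (csInf_le ((s.dom.finite_toSet.image _).bddBelow) ?_)
    exact ⟨a, by rw [hs]; exact_mod_cast ha, rfl⟩
  have htrank : ∀ a ∈ A, (1:ℝ) ≤ t.f a := by
    intro a ha
    refine le_trans hrankt (csInf_le ((t.dom.finite_toSet.image _).bddBelow) ?_)
    exact ⟨a, by rw [ht]; exact_mod_cast ha, rfl⟩
  -- block facts
  obtain ⟨n, b, hBeq, hbD, hb0pos, hbinc, _hjump, _hsucc, hstep⟩ := hB
  have hmono : ∀ j, j ≤ n → ∀ i, i < j → b i < b j := by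
    intro j
    induction j with
    | zero => intro _ i hi; exact absurd hi (Nat.not_lt_zero i)
    | succ k ih =>
      intro hj i hi
      have h1 : b k < b (k+1) := hbinc k (by omega)
      rcases Nat.lt_succ_iff_lt_or_eq.1 hi with h | h
      · exact lt_trans (ih (by omega) i h) h1
      · rw [h]; exact h1
  have hb0ge : (1:ℝ) ≤ b 0 := hmin (b 0) (hbD 0 (Nat.zero_le n)) hb0pos
  have hb0 : b 0 = 1 := by
    have h1B' : ∃ i, i ≤ n ∧ (1:ℝ) = b i := by rw [hBeq] at h1B; exact h1B
    obtain ⟨j, hj, hj1⟩ := h1B'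
    rcases Nat.eq_zero_or_pos j with h | h
    · rw [h] at hj1; exact hj1.symm
    · have := hmono j hj 0 h
      rw [← hj1] at this
      linarith
  have hrB' : ∃ i, i ≤ n ∧ r = b i := by rw [hBeq] at hrB; exact hrB
  obtain ⟨i, hi, hir⟩ := hrB'
  have hipos : 0 < i := by
    rcases Nat.eq_zero_or_pos i with h | h
    · exfalso
      rw [h] at hir
      rw [hb0] at hir
      linarith
    · exact h
  obtain ⟨i', rfl⟩ : ∃ i', i = i' + 1 := ⟨i - 1, by omega⟩
  have hi'n : i' < n := by omega
  have hpred_ge : b i' ≤ dpred D r := by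
    refine le_csSup ((hDfin.subset (fun x hx => hx.1)).bddAbove) ?_
    refine ⟨hbD i' (by omega), ?_⟩
    rw [hir]; exact hbinc i' hi'n
  have hr1 : r ≤ dpred D r + 1 := by
    calc r = b (i'+1) := hir
      _ ≤ b i' + b 0 := hstep i' hi'n
      _ = b i' + 1 := by rw [hb0]
      _ ≤ dpred D r + 1 := by linarith
  have hrD : r ∈ D := by rw [hir]; exact hbD (i'+1) hi
  have hrpos : (0:ℝ) < r := by linarith
  -- extremal points
  obtain ⟨a₀, ha₀, ha₀max⟩ := A.exists_max_image (fun a => |s.f a - t.f a|) hAne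
  obtain ⟨b₀, hb₀, hb₀min⟩ := A.exists_min_image (fun a => s.f a + t.f a) hAne
  have ha₀s : a₀ ∈ s.dom := by rw [hs]; exact ha₀
  have hb₀s : b₀ ∈ s.dom := by rw [hs]; exact hb₀
  have ha₀t : a₀ ∈ t.dom := by rw [ht]; exact ha₀
  have hb₀t : b₀ ∈ t.dom := by rw [ht]; exact hb₀
  have hTs : IsMetricTriple (s.f a₀) (s.f b₀) (dist a₀ b₀) := by
    have h1 := abs_le.1 (s.ineq1 a₀ ha₀s b₀ hb₀s)
    have h2 := s.ineq2 a₀ ha₀s b₀ hb₀s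
    exact ⟨by linarith [h1.2], by linarith [h1.1], h2⟩
  have hTt : IsMetricTriple (t.f a₀) (t.f b₀) (dist a₀ b₀) := by
    have h1 := abs_le.1 (t.ineq1 a₀ ha₀t b₀ hb₀t)
    have h2 := t.ineq2 a₀ ha₀t b₀ hb₀t
    exact ⟨by linarith [h1.2], by linarith [h1.1], h2⟩
  obtain ⟨d₀, hd₀D, hd₀pos, ⟨Ta1, Ta2, Ta3⟩, ⟨Tb1, Tb2, Tb3⟩⟩ :=
    hD4 (dist a₀ b₀) (s.f a₀) (s.f b₀) (t.f a₀) (t.f b₀)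
      (hM.2.1 a₀ b₀) (s.mem a₀ ha₀s) (s.mem b₀ hb₀s) (t.mem a₀ ha₀t) (t.mem b₀ hb₀t)
      (s.pos a₀ ha₀s) (s.pos b₀ hb₀s) (t.pos a₀ ha₀t) (t.pos b₀ hb₀t) hTs hTt
  set d : ℝ := max d₀ r with hd
  have hdD : d ∈ D := by
    rcases le_total d₀ r with h | h
    · rw [hd, max_eq_right h]; exact hrD
    · rw [hd, max_eq_left h]; exact hd₀D
  have hdpos : (0:ℝ) < d := lt_of_lt_of_le hd₀pos (le_max_left _ _)
  have habs : ∀ a ∈ s.dom, |s.f a - t.f a| ≤ d := by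
    intro a ha
    have h1 : |s.f a - t.f a| ≤ |s.f a₀ - t.f a₀| := ha₀max a (by rwa [hs] at ha)
    have h2 : |s.f a₀ - t.f a₀| ≤ d₀ := abs_sub_le_iff.2 ⟨by linarith, by linarith⟩
    exact le_trans h1 (le_trans h2 (le_max_left _ _))
  have hU : ∀ a ∈ s.dom, d ≤ s.f a + t.f a := by
    intro a ha
    have haA : a ∈ A := by rwa [hs] at ha
    refine max_le ?_ ?_
    · exact le_trans Tb3 (hb₀min a haA)
    · have := hsrank a haA
      have := htrank a haA
      linarith
  obtain ⟨x, hx, y, hy, hxy⟩ :=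
    exists_orb_pair h0D hM s t (ht.trans hs.symm) d hdD hdpos
      (fun a ha => by have := abs_le.1 (habs a ha); linarith [this.2])
      (fun a ha => by have := abs_le.1 (habs a ha); linarith [this.1])
      hU
  exact ⟨x, hx, y, hy, by rw [hxy]; exact le_max_right _ _⟩

end Sauer
end
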